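/- arXiv:2407.20913 — 9 statements merged into one kernel-verified Lean document; each statement's English description precedes it below -/
import Mathlib

section
/- Let D be a finite nonempty type and let c : D → D → ℝ be a cost function with c i i = 0 for every i ∈ D and satisfying the strict triangular condition c i k < c i j + c j k for all i, j, k ∈ D with j ≠ i and j ≠ k. Let r > 0, let N ≥ 1, let 0 ≤ τ_1 ≤ τ_2 ≤ ... ≤ τ_N be real numbers, and let ξ : {0,1,...,N} → D be any sequence with ξ_0 = i. Then − ∑_{n=1}^{N} e^{−r τ_n} · c (ξ_{n−1}) (ξ_n) ≤ max_{k ∈ D} (− c i k), or equivalently ∑_{n=1}^{N} e^{−r τ_n} · c (ξ_{n−1}) (ξ_n) ≥ min_{k ∈ D} c i k. -/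
/-- Lemma 2.2 (pathwise form): the total discounted switching cost of any finite
sequence of switches starting from regime `i` is bounded below by the smallest
one-step cost out of `i`. -/
theorem switching_cost_lower_bound
    {D : Type*} [Fintype D] [Nonempty D] (c : D → D → ℝ)
    (hself : ∀ i, c i i = 0)
    (htri : ∀ i j k, j ≠ i → j ≠ k → c i k < c i j + c j k)
    (r : ℝ) (hr : 0 < r) (N : ℕ) (hN : 1 ≤ N)
    (τ : ℕ → ℝ) (hτ1 : 0 ≤ τ 1)
    (hτmono : ∀ n, 1 ≤ n → n < N → τ n ≤ τ (n + 1))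
    (ξ : ℕ → D) (i : D) (hξ0 : ξ 0 = i) :
    -(∑ n ∈ Finset.Icc 1 N, Real.exp (-(r * τ n)) * c (ξ (n - 1)) (ξ n))
      ≤ Finset.univ.sup' Finset.univ_nonempty (fun k => -c i k) := by
  set m := Finset.univ.inf' Finset.univ_nonempty (fun k => c i k) with hm
  have hmle : ∀ k, m ≤ c i k := fun k =>
    Finset.inf'_le (f := fun k => c i k) (Finset.mem_univ k)
  have hm0 : m ≤ 0 := (hmle i).trans_eq (hself i)
  -- weak triangle inequality
  have htri' : ∀ a j k, c a k ≤ c a j + c j k := by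
    intro a j k
    by_cases h1 : j = a
    · subst h1; simp [hself]
    by_cases h2 : j = k
    · subst h2; simp [hself]
    exact (htri a j k h1 h2).le
  -- undiscounted partial sums dominate the direct cost
  have hA : ∀ n, 1 ≤ n → c i (ξ n) ≤ ∑ k ∈ Finset.Icc 1 n, c (ξ (k - 1)) (ξ k) := by
    intro n hn
    induction n, hn using Nat.le_induction with
    | base => simp [hξ0]
    | succ n hn ih =>
        rw [Finset.sum_Icc_succ_top (by omega : 1 ≤ n + 1)]
        calc c i (ξ (n + 1)) ≤ c i (ξ n) + c (ξ n) (ξ (n + 1)) := htri' _ _ _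
          _ ≤ (∑ k ∈ Finset.Icc 1 n, c (ξ (k - 1)) (ξ k)) + c (ξ n) (ξ (n + 1)) := by
              linarith [ih]
          _ = (∑ k ∈ Finset.Icc 1 n, c (ξ (k - 1)) (ξ k)) + c (ξ (n + 1 - 1)) (ξ (n + 1)) := by
              norm_num
  -- times are nonnegative
  have hτ0 : ∀ n, 1 ≤ n → n ≤ N → 0 ≤ τ n := by
    intro n hn
    induction n, hn using Nat.le_induction with
    | base => intro _; exact hτ1
    | succ n hn ih =>
        intro h
        have := hτmono n hn (by omega)
        have := ih (by omega)
        linarith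
  have hw1 : ∀ n, 1 ≤ n → n ≤ N → Real.exp (-(r * τ n)) ≤ 1 := by
    intro n h1 h2
    have : -(r * τ n) ≤ 0 := by
      have := hτ0 n h1 h2
      nlinarith
    simpa using Real.exp_le_exp.mpr this
  -- key discounted estimate
  have key : ∀ M, 1 ≤ M → M ≤ N →
      m + Real.exp (-(r * τ M)) * ((∑ k ∈ Finset.Icc 1 M, c (ξ (k - 1)) (ξ k)) - m)
        ≤ ∑ n ∈ Finset.Icc 1 M, Real.exp (-(r * τ n)) * c (ξ (n - 1)) (ξ n) := by
    intro M hM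
    induction M, hM using Nat.le_induction with
    | base =>
        intro h
        have hw := hw1 1 le_rfl h
        have hwp := Real.exp_pos (-(r * τ 1))
        simp only [Finset.Icc_self, Finset.sum_singleton]
        nlinarith
    | succ M hM ih =>
        intro h
        have hτle : τ M ≤ τ (M + 1) := hτmono M hM (by omega)
        have hwle : Real.exp (-(r * τ (M + 1))) ≤ Real.exp (-(r * τ M)) := by
          apply Real.exp_le_exp.mpr; nlinarith
        have hAM : m ≤ ∑ k ∈ Finset.Icc 1 M, c (ξ (k - 1)) (ξ k) :=
          le_trans (hmle (ξ M)) (hA M hM)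
        have ihh := ih (by omega)
        rw [Finset.sum_Icc_succ_top (by omega : 1 ≤ M + 1),
          Finset.sum_Icc_succ_top (by omega : 1 ≤ M + 1)]
        have hmul : Real.exp (-(r * τ (M + 1))) *
            ((∑ k ∈ Finset.Icc 1 M, c (ξ (k - 1)) (ξ k)) - m) ≤
            Real.exp (-(r * τ M)) *
            ((∑ k ∈ Finset.Icc 1 M, c (ξ (k - 1)) (ξ k)) - m) :=
          mul_le_mul_of_nonneg_right hwle (by linarith)
        nlinarith [Real.exp_pos (-(r * τ (M + 1)))]
  -- conclude
  have hAN : m ≤ ∑ k ∈ Finset.Icc 1 N, c (ξ (k - 1)) (ξ k) :=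
    le_trans (hmle (ξ N)) (hA N hN)
  have hS : m ≤ ∑ n ∈ Finset.Icc 1 N, Real.exp (-(r * τ n)) * c (ξ (n - 1)) (ξ n) := by
    have := key N hN le_rfl
    nlinarith [Real.exp_pos (-(r * τ N))]
  obtain ⟨k0, _, hk0⟩ := Finset.exists_mem_eq_inf' (Finset.univ_nonempty)
    (fun k => c i k)
  have : -c i k0 ≤ Finset.univ.sup' Finset.univ_nonempty (fun k => -c i k) :=
    Finset.le_sup' (fun k => -c i k) (Finset.mem_univ k0)
  have hmk : m = c i k0 := hk0
  linarith
end

section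
/- Theorem 4.1, case B1. In addition to the common setup, assume all four regime pairs share the same drift and volatility: b_{ij} = b and σ_{ij} = σ for all i, j ∈ {1,2} (hence K_{11} = K_{12} = K_{21} = K_{22} =: K), and assume c12 > 0, c21 > 0, χ12 > 0, χ21 > 0 (Condition B1). Then the quadruple v11(x) = v12(x) = v21(x) = v22(x) = K·x^γ solves the QVI system at every x > 0. -/
/-- Generator of a one-dimensional geometric Brownian motion with drift `b` and
volatility `σ`: `(L v)(x) = (1/2)σ²x²v''(x) + b x v'(x)`. -/
noncomputable def Lop (b σ : ℝ) (v : ℝ → ℝ) (x : ℝ) : ℝ :=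
  (1/2) * σ^2 * x^2 * deriv (deriv v) x + b * x * deriv v x

/-- The quadruple `(v11, v12, v21, v22)` solves the Isaacs system of
quasi-variational inequalities at the point `x`, with profit `f(x) = x^γ`. -/
def solvesQVI (r γ c12 c21 χ12 χ21 b11 σ11 b12 σ12 b21 σ21 b22 σ22 : ℝ)
    (v11 v12 v21 v22 : ℝ → ℝ) (x : ℝ) : Prop :=
  max (min (r * v11 x - Lop b11 σ11 v11 x - x ^ γ) (v11 x - (v21 x - c12)))
      (v11 x - (v12 x + χ12)) = 0 ∧
  max (min (r * v12 x - Lop b12 σ12 v12 x - x ^ γ) (v12 x - (v22 x - c12)))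
      (v12 x - (v11 x + χ21)) = 0 ∧
  max (min (r * v21 x - Lop b21 σ21 v21 x - x ^ γ) (v21 x - (v11 x - c21)))
      (v21 x - (v22 x + χ12)) = 0 ∧
  max (min (r * v22 x - Lop b22 σ22 v22 x - x ^ γ) (v22 x - (v12 x - c21)))
      (v22 x - (v21 x + χ21)) = 0

lemma deriv1' (K γ : ℝ) {x : ℝ} (hx : 0 < x) :
    deriv (fun y : ℝ => K * y ^ γ) x = K * (γ * x ^ (γ - 1)) :=
  ((Real.hasDerivAt_rpow_const (x := x) (p := γ) (Or.inl hx.ne')).const_mul K).deriv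

lemma deriv2' (K γ : ℝ) {x : ℝ} (hx : 0 < x) :
    deriv (deriv (fun y : ℝ => K * y ^ γ)) x
      = K * γ * ((γ - 1) * x ^ (γ - 2)) := by
  have hev : deriv (fun y : ℝ => K * y ^ γ) =ᶠ[nhds x] fun y => K * γ * y ^ (γ - 1) := by
    filter_upwards [IsOpen.mem_nhds isOpen_Ioi (Set.mem_Ioi.mpr hx)] with y hy
    rw [deriv1' K γ hy]; ring
  rw [Filter.EventuallyEq.deriv_eq hev]
  rw [((Real.hasDerivAt_rpow_const (x := x) (p := γ - 1)
    (Or.inl hx.ne')).const_mul (K * γ)).deriv]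
  ring_nf

lemma Lop_eq' (K γ b σ : ℝ) {x : ℝ} (hx : 0 < x) :
    Lop b σ (fun y => K * y ^ γ) x
      = (b * γ - (1/2) * σ^2 * γ * (1 - γ)) * (K * x ^ γ) := by
  unfold Lop
  rw [deriv1' K γ hx, deriv2' K γ hx]
  have hx2 : x ^ (2:ℕ) * x ^ (γ - 2) = x ^ γ := by
    rw [← Real.rpow_natCast x 2, ← Real.rpow_add hx]; norm_num
  have hx1 : x * x ^ (γ - 1) = x ^ γ := by
    nth_rewrite 1 [← Real.rpow_one x]
    rw [← Real.rpow_add hx]; norm_num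
  linear_combination ((1/2) * σ^2 * K * γ * (γ - 1)) * hx2 + (b * K * γ) * hx1

theorem thm4_1_B1
    (r γ c12 c21 χ12 χ21 : ℝ)
    (b11 σ11 b12 σ12 b21 σ21 b22 σ22 : ℝ)
    (K11 K12 K21 K22 : ℝ)
    (hr : 0 < r) (hγ0 : 0 < γ) (hγ1 : γ < 1)
    (hσ11 : 0 < σ11) (hσ12 : 0 < σ12) (hσ21 : 0 < σ21) (hσ22 : 0 < σ22)
    (hd11 : 0 < r - b11*γ + (1/2)*σ11^2*γ*(1-γ))
    (hd12 : 0 < r - b12*γ + (1/2)*σ12^2*γ*(1-γ))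
    (hd21 : 0 < r - b21*γ + (1/2)*σ21^2*γ*(1-γ))
    (hd22 : 0 < r - b22*γ + (1/2)*σ22^2*γ*(1-γ))
    (hrb11 : b11 < r) (hrb12 : b12 < r) (hrb21 : b21 < r) (hrb22 : b22 < r)
    (hK11 : K11 = 1/(r - b11*γ + (1/2)*σ11^2*γ*(1-γ)))
    (hK12 : K12 = 1/(r - b12*γ + (1/2)*σ12^2*γ*(1-γ)))
    (hK21 : K21 = 1/(r - b21*γ + (1/2)*σ21^2*γ*(1-γ)))
    (hK22 : K22 = 1/(r - b22*γ + (1/2)*σ22^2*γ*(1-γ)))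
    (heqb12 : b12 = b11) (heqb21 : b21 = b11) (heqb22 : b22 = b11)
    (heqσ12 : σ12 = σ11) (heqσ21 : σ21 = σ11) (heqσ22 : σ22 = σ11)
    (K : ℝ) (hK : K = K11)
    (hc12 : 0 < c12) (hc21 : 0 < c21) (hχ12 : 0 < χ12) (hχ21 : 0 < χ21)
    :
    ∀ x : ℝ, 0 < x →
      solvesQVI r γ c12 c21 χ12 χ21 b11 σ11 b12 σ12 b21 σ21 b22 σ22
        (fun y => K * y ^ γ)
        (fun y => K * y ^ γ)
        (fun y => K * y ^ γ)
        (fun y => K * y ^ γ) x := by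
  intro x hx
  subst heqb12 heqb21 heqb22 heqσ12 heqσ21 heqσ22
  have hA : r * (K * x ^ γ) - Lop b22 σ22 (fun y => K * y ^ γ) x - x ^ γ = 0 := by
    rw [Lop_eq' K γ b22 σ22 hx]
    have hKd : K * (r - b22*γ + (1/2)*σ22^2*γ*(1-γ)) = 1 := by
      rw [hK, hK11, one_div, inv_mul_cancel₀ (ne_of_gt hd22)]
    linear_combination (x ^ γ) * hKd
  constructor
  · simp only [hA]
    rw [min_eq_left (by simpa using hc12.le)]
    rw [max_eq_left (by simpa using hχ12.le)]
  constructor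
  · simp only [hA]
    rw [min_eq_left (by simpa using hc12.le)]
    rw [max_eq_left (by simpa using hχ21.le)]
  constructor
  · simp only [hA]
    rw [min_eq_left (by simpa using hc21.le)]
    rw [max_eq_left (by simpa using hχ12.le)]
  · simp only [hA]
    rw [min_eq_left (by simpa using hc21.le)]
    rw [max_eq_left (by simpa using hχ21.le)]
end

section
/- Theorem 4.1, case B3. In addition to the common setup, assume all four regime pairs share the same drift and volatility: b_{ij} = b and σ_{ij} = σ for all i, j ∈ {1,2} (hence K_{11} = K_{12} = K_{21} = K_{22} =: K), and assume c12 > 0, c21 > 0, χ12 < 0, χ21 > 0 and χ12 + χ21 > 0 (Condition B3). Then the quadruple v11(x) = K·x^γ + χ12, v12(x) = K·x^γ, v21(x) = K·x^γ + χ12, v22(x) = K·x^γ solves the QVI system at every x > 0. -/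
lemma myderiv1 (K χ γ : ℝ) {x : ℝ} (hx : 0 < x) :
    deriv (fun y : ℝ => K * y ^ γ + χ) x = K * γ * x ^ (γ - 1) := by
  have h := ((Real.hasDerivAt_rpow_const (p := γ) (Or.inl hx.ne')).const_mul K).add_const χ
  rw [h.deriv]; ring

lemma myderiv2 (K χ γ : ℝ) {x : ℝ} (hx : 0 < x) :
    deriv (deriv (fun y : ℝ => K * y ^ γ + χ)) x = K * γ * (γ - 1) * x ^ (γ - 2) := by
  have hev : deriv (fun y : ℝ => K * y ^ γ + χ) =ᶠ[nhds x]
      fun y => K * γ * y ^ (γ - 1) := by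
    filter_upwards [eventually_gt_nhds hx] with y hy using myderiv1 K χ γ hy
  rw [hev.deriv_eq]
  have h := (Real.hasDerivAt_rpow_const (p := γ - 1) (Or.inl hx.ne')).const_mul (K * γ)
  rw [h.deriv]; ring_nf

lemma myLop (b σ K χ γ : ℝ) {x : ℝ} (hx : 0 < x) :
    Lop b σ (fun y : ℝ => K * y ^ γ + χ) x
      = K * (b * γ + (1/2) * σ^2 * γ * (γ - 1)) * x ^ γ := by
  rw [Lop, myderiv1 K χ γ hx, myderiv2 K χ γ hx]
  have h1 : x ^ (2:ℕ) * x ^ (γ - 2) = x ^ γ := by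
    rw [← Real.rpow_natCast x 2, ← Real.rpow_add hx]; norm_num
  have h2 : x * x ^ (γ - 1) = x ^ γ := by
    nth_rewrite 1 [← Real.rpow_one x]
    rw [← Real.rpow_add hx]; norm_num
  calc (1/2) * σ^2 * x^2 * (K * γ * (γ - 1) * x ^ (γ - 2)) + b * x * (K * γ * x ^ (γ-1))
      = (1/2) * σ^2 * K * γ * (γ-1) * (x^(2:ℕ) * x^(γ-2)) + b * K * γ * (x * x^(γ-1)) := by ring
    _ = K * (b * γ + (1/2) * σ^2 * γ * (γ - 1)) * x ^ γ := by rw [h1, h2]; ring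

theorem thm4_1_B3
    (r γ c12 c21 χ12 χ21 : ℝ)
    (b11 σ11 b12 σ12 b21 σ21 b22 σ22 : ℝ)
    (K11 K12 K21 K22 : ℝ)
    (hr : 0 < r) (hγ0 : 0 < γ) (hγ1 : γ < 1)
    (hσ11 : 0 < σ11) (hσ12 : 0 < σ12) (hσ21 : 0 < σ21) (hσ22 : 0 < σ22)
    (hd11 : 0 < r - b11*γ + (1/2)*σ11^2*γ*(1-γ))
    (hd12 : 0 < r - b12*γ + (1/2)*σ12^2*γ*(1-γ))
    (hd21 : 0 < r - b21*γ + (1/2)*σ21^2*γ*(1-γ))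
    (hd22 : 0 < r - b22*γ + (1/2)*σ22^2*γ*(1-γ))
    (hrb11 : b11 < r) (hrb12 : b12 < r) (hrb21 : b21 < r) (hrb22 : b22 < r)
    (hK11 : K11 = 1/(r - b11*γ + (1/2)*σ11^2*γ*(1-γ)))
    (hK12 : K12 = 1/(r - b12*γ + (1/2)*σ12^2*γ*(1-γ)))
    (hK21 : K21 = 1/(r - b21*γ + (1/2)*σ21^2*γ*(1-γ)))
    (hK22 : K22 = 1/(r - b22*γ + (1/2)*σ22^2*γ*(1-γ)))
    (heqb12 : b12 = b11) (heqb21 : b21 = b11) (heqb22 : b22 = b11)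
    (heqσ12 : σ12 = σ11) (heqσ21 : σ21 = σ11) (heqσ22 : σ22 = σ11)
    (K : ℝ) (hK : K = K11)
    (hc12 : 0 < c12) (hc21 : 0 < c21) (hχ12 : χ12 < 0) (hχ21 : 0 < χ21)
    (hχsum : 0 < χ12 + χ21)
    :
    ∀ x : ℝ, 0 < x →
      solvesQVI r γ c12 c21 χ12 χ21 b11 σ11 b12 σ12 b21 σ21 b22 σ22
        (fun y => K * y ^ γ + χ12)
        (fun y => K * y ^ γ)
        (fun y => K * y ^ γ + χ12)
        (fun y => K * y ^ γ) x := by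
  intro x hx
  rw [heqb12, heqb21, heqb22, heqσ12, heqσ21, heqσ22]
  subst hK hK11
  have hKd : (1/(r - b11*γ + (1/2)*σ11^2*γ*(1-γ))) *
      (r - b11*γ + (1/2)*σ11^2*γ*(1-γ)) = 1 :=
    one_div_mul_cancel hd11.ne'
  set K := 1/(r - b11*γ + (1/2)*σ11^2*γ*(1-γ)) with hKdef
  have key : ∀ χ : ℝ,
      r * (K * x ^ γ + χ) - Lop b11 σ11 (fun y => K * y ^ γ + χ) x - x ^ γ = r * χ := by
    intro χ
    rw [myLop b11 σ11 K χ γ hx]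
    linear_combination (x ^ γ) * hKd
  have key0 : r * (K * x ^ γ) - Lop b11 σ11 (fun y => K * y ^ γ) x - x ^ γ = 0 := by
    have hfe : (fun y : ℝ => K * y ^ γ) = fun y : ℝ => K * y ^ γ + 0 := by
      funext y; ring
    have := key 0
    rw [hfe]
    simpa using this
  have hrχ12 : r * χ12 < 0 := mul_neg_of_pos_of_neg hr hχ12
  refine ⟨?_, ?_, ?_, ?_⟩
  · show max (min (r * (K * x ^ γ + χ12) - Lop b11 σ11 (fun y => K * y ^ γ + χ12) x - x ^ γ)
        ((K * x ^ γ + χ12) - ((K * x ^ γ + χ12) - c12)))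
        ((K * x ^ γ + χ12) - ((K * x ^ γ) + χ12)) = 0
    rw [key χ12]
    have : min (r * χ12) ((K * x ^ γ + χ12) - ((K * x ^ γ + χ12) - c12)) = r * χ12 :=
      min_eq_left (by linarith)
    rw [this]
    rw [max_eq_right (by linarith)]
    ring
  · show max (min (r * (K * x ^ γ) - Lop b11 σ11 (fun y => K * y ^ γ) x - x ^ γ)
        ((K * x ^ γ) - ((K * x ^ γ) - c12)))
        ((K * x ^ γ) - ((K * x ^ γ + χ12) + χ21)) = 0
    rw [key0]
    rw [min_eq_left (by linarith)]
    rw [max_eq_left (by linarith)]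
  · show max (min (r * (K * x ^ γ + χ12) - Lop b11 σ11 (fun y => K * y ^ γ + χ12) x - x ^ γ)
        ((K * x ^ γ + χ12) - ((K * x ^ γ + χ12) - c21)))
        ((K * x ^ γ + χ12) - ((K * x ^ γ) + χ12)) = 0
    rw [key χ12]
    have : min (r * χ12) ((K * x ^ γ + χ12) - ((K * x ^ γ + χ12) - c21)) = r * χ12 :=
      min_eq_left (by linarith)
    rw [this]
    rw [max_eq_right (by linarith)]
    ring
  · show max (min (r * (K * x ^ γ) - Lop b11 σ11 (fun y => K * y ^ γ) x - x ^ γ)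
        ((K * x ^ γ) - ((K * x ^ γ) - c21)))
        ((K * x ^ γ) - ((K * x ^ γ + χ12) + χ21)) = 0
    rw [key0]
    rw [min_eq_left (by linarith)]
    rw [max_eq_left (by linarith)]
end

section
/- Theorem 4.1, case B4. In addition to the common setup, assume all four regime pairs share the same drift and volatility: b_{ij} = b and σ_{ij} = σ for all i, j ∈ {1,2} (hence K_{11} = K_{12} = K_{21} = K_{22} =: K), and assume c12 < 0, c21 > 0, χ12 < 0, χ21 > 0, c12 + c21 > 0 and χ12 + χ21 > 0 (Condition B4). Then the quadruple v11(x) = K·x^γ − c12 + χ12, v12(x) = K·x^γ − c12, v21(x) = K·x^γ + χ12, v22(x) = K·x^γ solves the QVI system at every x > 0. -/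
lemma Lop_eval' (b σ K a γ x : ℝ) (hx : 0 < x) :
    Lop b σ (fun y => K * y ^ γ + a) x
      = (1/2) * σ^2 * K * γ * (γ-1) * x ^ γ + b * K * γ * x ^ γ := by
  have hne : x ≠ 0 := hx.ne'
  have hd : ∀ y : ℝ, y ≠ 0 →
      HasDerivAt (fun z : ℝ => K * z ^ γ + a) (K * (γ * y ^ (γ-1))) y :=
    fun y hy => ((Real.hasDerivAt_rpow_const (Or.inl hy)).const_mul K).add_const a
  have h1 : deriv (fun z : ℝ => K * z ^ γ + a) x = K * (γ * x ^ (γ-1)) := (hd x hne).deriv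
  have hev : deriv (fun z : ℝ => K * z ^ γ + a) =ᶠ[nhds x] fun y => K * (γ * y ^ (γ-1)) := by
    filter_upwards [eventually_ne_nhds hne] with y hy using (hd y hy).deriv
  have h2 : deriv (deriv (fun z : ℝ => K * z ^ γ + a)) x
      = K * (γ * ((γ-1) * x ^ (γ-1-1))) := by
    rw [hev.deriv_eq]
    exact (((Real.hasDerivAt_rpow_const (p := γ-1) (Or.inl hne)).const_mul γ).const_mul K).deriv
  unfold Lop
  rw [h1, h2]
  have e1 : x ^ (2:ℕ) * x ^ (γ-1-1) = x ^ γ := by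
    rw [← Real.rpow_natCast x 2, ← Real.rpow_add hx]
    congr 1; push_cast; ring
  have e2 : x * x ^ (γ-1) = x ^ γ := by
    nth_rewrite 1 [← Real.rpow_one x]; rw [← Real.rpow_add hx]; norm_num
  linear_combination ((1:ℝ)/2)*σ^2*K*γ*(γ-1)*e1 + b*K*γ*e2

theorem thm4_1_B4
    (r γ c12 c21 χ12 χ21 : ℝ)
    (b11 σ11 b12 σ12 b21 σ21 b22 σ22 : ℝ)
    (K11 K12 K21 K22 : ℝ)
    (hr : 0 < r) (hγ0 : 0 < γ) (hγ1 : γ < 1)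
    (hσ11 : 0 < σ11) (hσ12 : 0 < σ12) (hσ21 : 0 < σ21) (hσ22 : 0 < σ22)
    (hd11 : 0 < r - b11*γ + (1/2)*σ11^2*γ*(1-γ))
    (hd12 : 0 < r - b12*γ + (1/2)*σ12^2*γ*(1-γ))
    (hd21 : 0 < r - b21*γ + (1/2)*σ21^2*γ*(1-γ))
    (hd22 : 0 < r - b22*γ + (1/2)*σ22^2*γ*(1-γ))
    (hrb11 : b11 < r) (hrb12 : b12 < r) (hrb21 : b21 < r) (hrb22 : b22 < r)
    (hK11 : K11 = 1/(r - b11*γ + (1/2)*σ11^2*γ*(1-γ)))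
    (hK12 : K12 = 1/(r - b12*γ + (1/2)*σ12^2*γ*(1-γ)))
    (hK21 : K21 = 1/(r - b21*γ + (1/2)*σ21^2*γ*(1-γ)))
    (hK22 : K22 = 1/(r - b22*γ + (1/2)*σ22^2*γ*(1-γ)))
    (heqb12 : b12 = b11) (heqb21 : b21 = b11) (heqb22 : b22 = b11)
    (heqσ12 : σ12 = σ11) (heqσ21 : σ21 = σ11) (heqσ22 : σ22 = σ11)
    (K : ℝ) (hK : K = K11)
    (hc12 : c12 < 0) (hc21 : 0 < c21) (hχ12 : χ12 < 0) (hχ21 : 0 < χ21)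
    (hcsum : 0 < c12 + c21) (hχsum : 0 < χ12 + χ21)
    :
    ∀ x : ℝ, 0 < x →
      solvesQVI r γ c12 c21 χ12 χ21 b11 σ11 b12 σ12 b21 σ21 b22 σ22
        (fun y => K * y ^ γ - c12 + χ12)
        (fun y => K * y ^ γ - c12)
        (fun y => K * y ^ γ + χ12)
        (fun y => K * y ^ γ) x := by
  intro x hx
  have hKD : K * (r - b11*γ + (1/2)*σ11^2*γ*(1-γ)) = 1 := by
    rw [hK, hK11]; exact one_div_mul_cancel hd11.ne'
  have f1 : (fun y : ℝ => K * y ^ γ - c12 + χ12) = (fun y => K * y ^ γ + (χ12 - c12)) := by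
    funext y; ring
  have f2 : (fun y : ℝ => K * y ^ γ - c12) = (fun y => K * y ^ γ + (-c12)) := by
    funext y; ring
  have f4 : (fun y : ℝ => K * y ^ γ) = (fun y => K * y ^ γ + 0) := by
    funext y; ring
  simp only [solvesQVI, f1, f2, f4]
  rw [heqb12, heqb21, heqb22, heqσ12, heqσ21, heqσ22]
  rw [Lop_eval' b11 σ11 K (χ12 - c12) γ x hx, Lop_eval' b11 σ11 K (-c12) γ x hx,
    Lop_eval' b11 σ11 K χ12 γ x hx, Lop_eval' b11 σ11 K 0 γ x hx]
  have hE1 : r * (K * x ^ γ - c12 + χ12)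
      - ((1/2) * σ11^2 * K * γ * (γ-1) * x ^ γ + b11 * K * γ * x ^ γ) - x ^ γ
      = r * (χ12 - c12) := by linear_combination x ^ γ * hKD
  have hE2 : r * (K * x ^ γ - c12)
      - ((1/2) * σ11^2 * K * γ * (γ-1) * x ^ γ + b11 * K * γ * x ^ γ) - x ^ γ
      = r * (-c12) := by linear_combination x ^ γ * hKD
  have hE3 : r * (K * x ^ γ + χ12)
      - ((1/2) * σ11^2 * K * γ * (γ-1) * x ^ γ + b11 * K * γ * x ^ γ) - x ^ γ
      = r * χ12 := by linear_combination x ^ γ * hKD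
  have hE4 : r * (K * x ^ γ)
      - ((1/2) * σ11^2 * K * γ * (γ-1) * x ^ γ + b11 * K * γ * x ^ γ) - x ^ γ
      = 0 := by linear_combination x ^ γ * hKD
  rw [hE1, hE2, hE3, hE4]
  refine ⟨?_, ?_, ?_, ?_⟩
  · rw [show K * x ^ γ - c12 + χ12 - (K * x ^ γ + χ12 - c12) = 0 from by ring,
      show K * x ^ γ - c12 + χ12 - (K * x ^ γ - c12 + χ12) = 0 from by ring]
    exact max_eq_right (min_le_right _ _)
  · rw [show K * x ^ γ - c12 - (K * x ^ γ - c12) = 0 from by ring,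
      show K * x ^ γ - c12 - (K * x ^ γ - c12 + χ12 + χ21) = -(χ12 + χ21) from by ring,
      min_eq_right (mul_nonneg hr.le (by linarith)),
      max_eq_left (by linarith)]
  · rw [show K * x ^ γ + χ12 - (K * x ^ γ + χ12) = 0 from by ring]
    exact max_eq_right
      (le_trans (min_le_left _ _) (mul_nonpos_of_nonneg_of_nonpos hr.le hχ12.le))
  · rw [show K * x ^ γ - (K * x ^ γ - c12 - c21) = c12 + c21 from by ring,
      show K * x ^ γ - (K * x ^ γ + χ12 + χ21) = -(χ12 + χ21) from by ring,
      min_eq_left (by linarith), max_eq_left (by linarith)]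
end

section
/- Theorem 4.2, case B1. In addition to the common setup, assume b11 = b12, σ11 = σ12, b21 = b22, σ21 = σ22, and K₁ := K_{11} = K_{12} < K_{21} = K_{22} =: K₂; assume c12 > 0, c21 > 0, χ12 > 0, χ21 > 0 (Condition B1). Let m⁺ := m_{11}⁺ (= m_{12}⁺), x* := (m⁺·c12 / ((m⁺ − γ)·(K₂ − K₁)))^{1/γ} and A := (K₂ − K₁)·(γ/m⁺)·(x*)^{γ − m⁺}. Define v11(x) = v12(x) = K₁·x^γ + A·x^{m⁺} for 0 < x < x* and = K₂·x^γ − c12 for x ≥ x*, and v21(x) = v22(x) = K₂·x^γ for all x > 0. Then this quadruple solves the QVI system at every x > 0 with x ≠ x*. -/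
private lemma Lop_congr' {b σ x : ℝ} {f g : ℝ → ℝ} (h : f =ᶠ[nhds x] g) :
    Lop b σ f x = Lop b σ g x := by
  unfold Lop
  rw [h.deriv_eq, Filter.EventuallyEq.deriv_eq h.deriv]

private lemma twoPow_hasDerivAt (a p c q y : ℝ) (hy : y ≠ 0) :
    HasDerivAt (fun z : ℝ => a * z ^ p + c * z ^ q)
      (a * p * y ^ (p-1) + c * q * y ^ (q-1)) y := by
  have h1 := (Real.hasDerivAt_rpow_const (x := y) (p := p) (Or.inl hy)).const_mul a
  have h2 := (Real.hasDerivAt_rpow_const (x := y) (p := q) (Or.inl hy)).const_mul c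
  have h := h1.add h2
  exact h.congr_deriv (by ring)

private lemma lop_twoPow (β σ a p c q x : ℝ) (hx : 0 < x) :
    Lop β σ (fun z : ℝ => a * z ^ p + c * z ^ q) x
      = a * x ^ p * ((1/2)*σ^2*p*(p-1) + β*p)
        + c * x ^ q * ((1/2)*σ^2*q*(q-1) + β*q) := by
  have hd : deriv (fun z : ℝ => a * z ^ p + c * z ^ q) =ᶠ[nhds x]
      (fun z : ℝ => (a*p) * z ^ (p-1) + (c*q) * z ^ (q-1)) := by
    filter_upwards [compl_singleton_mem_nhds hx.ne'] with y hy
    have := (twoPow_hasDerivAt a p c q y hy).deriv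
    simpa [mul_assoc] using this
  have hd1 : deriv (fun z : ℝ => a * z ^ p + c * z ^ q) x
      = a*p * x ^ (p-1) + c*q * x ^ (q-1) := (twoPow_hasDerivAt a p c q x hx.ne').deriv
  have hd2 : deriv (deriv (fun z : ℝ => a * z ^ p + c * z ^ q)) x
      = (a*p)*(p-1) * x ^ (p-1-1) + (c*q)*(q-1) * x ^ (q-1-1) := by
    rw [hd.deriv_eq]
    exact (twoPow_hasDerivAt (a*p) (p-1) (c*q) (q-1) x hx.ne').deriv
  unfold Lop
  rw [hd1, hd2]
  have e1 : x^(2:ℕ) * x^(p-1-1) = x^p := by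
    rw [← Real.rpow_natCast x 2, ← Real.rpow_add hx]; congr 1; ring
  have e1q : x^(2:ℕ) * x^(q-1-1) = x^q := by
    rw [← Real.rpow_natCast x 2, ← Real.rpow_add hx]; congr 1; ring
  have e2 : x * x^(p-1) = x^p := by
    nth_rewrite 1 [← Real.rpow_one x]
    rw [← Real.rpow_add hx]; congr 1; ring
  have e2q : x * x^(q-1) = x^q := by
    nth_rewrite 1 [← Real.rpow_one x]
    rw [← Real.rpow_add hx]; congr 1; ring
  linear_combination (1/2*σ^2*a*p*(p-1)) * e1 + (1/2*σ^2*c*q*(q-1)) * e1q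
    + (β*a*p) * e2 + (β*c*q) * e2q

/-- Facts about the positive root `m` of `(1/2)σ²m(m-1) + bm - r = 0`. -/
private lemma root_facts (r γ b11 σ11 : ℝ)
    (hr : 0 < r) (hσ11 : 0 < σ11)
    (hd11 : 0 < r - b11*γ + (1/2)*σ11^2*γ*(1-γ))
    (m : ℝ) (hm : m = 1/2 - b11/σ11^2 + Real.sqrt ((1/2 - b11/σ11^2)^2 + 2*r/σ11^2)) :
    ((1/2)*σ11^2*m*(m-1) + b11*m - r = 0) ∧ γ < m := by
  set h : ℝ := 1/2 - b11/σ11^2 with hh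
  set s : ℝ := Real.sqrt (h^2 + 2*r/σ11^2) with hs
  have harg : 0 < h^2 + 2*r/σ11^2 := by positivity
  have hs2 : s^2 = h^2 + 2*r/σ11^2 := Real.sq_sqrt harg.le
  have hspos : 0 < s := Real.sqrt_pos.2 harg
  have hσ2 : (0:ℝ) < σ11^2 := by positivity
  have hhσ : h * σ11^2 = σ11^2/2 - b11 := by rw [hh]; field_simp [hσ11.ne']
  clear_value s h
  constructor
  · have hmh : m - h = s := by rw [hm]; ring
    have : (m - h)^2 = h^2 + 2*r/σ11^2 := by rw [hmh]; exact hs2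
    have h2 : (m - h)^2 * σ11^2 = h^2 * σ11^2 + 2*r := by
      rw [this]; field_simp
    linear_combination (1/2)*h2 + m*hhσ
  · by_cases hc : γ ≤ h
    · rw [hm]; linarith
    · push_neg at hc
      have hs2' : s^2 * σ11^2 = h^2 * σ11^2 + 2*r := by
        rw [hs2]; field_simp
      have key : s^2 * σ11^2 - (γ - h)^2 * σ11^2 = 2*(r - b11*γ + (1/2)*σ11^2*γ*(1-γ)) := by
        linear_combination hs2' + 2*γ*hhσ
      have hlt : (γ - h)^2 < s^2 := by
        by_contra hcon
        push_neg at hcon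
        have := mul_le_mul_of_nonneg_right hcon hσ2.le
        nlinarith [key, hd11, this]
      have : γ - h < s := by
        by_contra hcon
        push_neg at hcon
        have := pow_le_pow_left₀ hspos.le hcon 2
        linarith
      rw [hm]; linarith

set_option maxHeartbeats 1000000 in
theorem thm4_2_B1
    (r γ c12 c21 χ12 χ21 : ℝ)
    (b11 σ11 b12 σ12 b21 σ21 b22 σ22 : ℝ)
    (K11 K12 K21 K22 : ℝ)
    (hr : 0 < r) (hγ0 : 0 < γ) (hγ1 : γ < 1)
    (hσ11 : 0 < σ11) (hσ12 : 0 < σ12) (hσ21 : 0 < σ21) (hσ22 : 0 < σ22)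
    (hd11 : 0 < r - b11*γ + (1/2)*σ11^2*γ*(1-γ))
    (hd12 : 0 < r - b12*γ + (1/2)*σ12^2*γ*(1-γ))
    (hd21 : 0 < r - b21*γ + (1/2)*σ21^2*γ*(1-γ))
    (hd22 : 0 < r - b22*γ + (1/2)*σ22^2*γ*(1-γ))
    (hrb11 : b11 < r) (hrb12 : b12 < r) (hrb21 : b21 < r) (hrb22 : b22 < r)
    (hK11 : K11 = 1/(r - b11*γ + (1/2)*σ11^2*γ*(1-γ)))
    (hK12 : K12 = 1/(r - b12*γ + (1/2)*σ12^2*γ*(1-γ)))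
    (hK21 : K21 = 1/(r - b21*γ + (1/2)*σ21^2*γ*(1-γ)))
    (hK22 : K22 = 1/(r - b22*γ + (1/2)*σ22^2*γ*(1-γ)))
    (heqb12 : b12 = b11) (heqσ12 : σ12 = σ11)
    (heqb22 : b22 = b21) (heqσ22 : σ22 = σ21)
    (K₁ K₂ : ℝ) (hK₁ : K₁ = K11) (hK₂ : K₂ = K21)
    (hKlt : K₁ < K₂)
    (m : ℝ) (hm : m = 1/2 - b11/σ11^2 + Real.sqrt ((1/2 - b11/σ11^2)^2 + 2*r/σ11^2))
    (xs A : ℝ)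
    (hxs : xs = (m * c12 / ((m - γ) * (K₂ - K₁))) ^ (1/γ))
    (hA : A = (K₂ - K₁) * (γ / m) * xs ^ (γ - m))
    (hc12 : 0 < c12) (hc21 : 0 < c21) (hχ12 : 0 < χ12) (hχ21 : 0 < χ21)
    :
    ∀ x : ℝ, 0 < x → x ≠ xs →
      solvesQVI r γ c12 c21 χ12 χ21 b11 σ11 b12 σ12 b21 σ21 b22 σ22
        (fun y => if y < xs then K₁ * y ^ γ + A * y ^ m else K₂ * y ^ γ - c12)
        (fun y => if y < xs then K₁ * y ^ γ + A * y ^ m else K₂ * y ^ γ - c12)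
        (fun y => K₂ * y ^ γ)
        (fun y => K₂ * y ^ γ) x := by
  intro x hx hxx
  have hσ2 : (0:ℝ) < σ11^2 := by positivity
  have hK1d : K₁ * (r - b11*γ + (1/2)*σ11^2*γ*(1-γ)) = 1 := by
    rw [hK₁, hK11]; exact one_div_mul_cancel hd11.ne'
  have hK2d : K₂ * (r - b21*γ + (1/2)*σ21^2*γ*(1-γ)) = 1 := by
    rw [hK₂, hK21]; exact one_div_mul_cancel hd21.ne'
  have hK1pos : 0 < K₁ := by
    rw [hK₁, hK11]; positivity
  have hK2pos : 0 < K₂ := by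
    rw [hK₂, hK21]; positivity
  have hδ : 0 < K₂ - K₁ := sub_pos.2 hKlt
  obtain ⟨hQm, hmγ⟩ := root_facts r γ b11 σ11 hr hσ11 hd11 m hm
  have hm0 : 0 < m := hγ0.trans hmγ
  have hmγ' : 0 < m - γ := sub_pos.2 hmγ
  have hB : 0 < m * c12 / ((m - γ) * (K₂ - K₁)) :=
    div_pos (mul_pos hm0 hc12) (mul_pos hmγ' hδ)
  have hxs0 : 0 < xs := by
    rw [hxs]; exact Real.rpow_pos_of_pos hB _
  have hxsγ : xs ^ γ = m * c12 / ((m - γ) * (K₂ - K₁)) := by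
    rw [hxs, ← Real.rpow_mul hB.le, one_div, inv_mul_cancel₀ hγ0.ne', Real.rpow_one]
  have hc12eq : (K₂ - K₁) * xs ^ γ * (m - γ) = m * c12 := by
    rw [hxsγ]; field_simp
  -- Young's inequality
  have young : ∀ t : ℝ, 0 ≤ t → t ^ γ ≤ (1 - γ/m) + (γ/m) * t ^ m := by
    intro t ht
    have hw1 : 0 ≤ 1 - γ/m := by
      have : γ/m ≤ 1 := (div_le_one hm0).2 hmγ.le
      linarith
    have h := Real.geom_mean_le_arith_mean2_weighted hw1
      (le_of_lt (div_pos hγ0 hm0)) (zero_le_one) (Real.rpow_nonneg ht m) (by ring)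
    rw [Real.one_rpow, one_mul, mul_one] at h
    have he : (t^m)^(γ/m) = t^γ := by
      rw [← Real.rpow_mul ht]; congr 1; field_simp
    rwa [he] at h
  -- inequality (obstacle from below, continuation region): δ y^γ - A y^m ≤ c12
  have ineq2 : ∀ y : ℝ, 0 < y → (K₂ - K₁) * y ^ γ - A * y ^ m ≤ c12 := by
    intro y hy
    have hu : 0 < y / xs := div_pos hy hxs0
    have E1 : y ^ γ = xs ^ γ * (y/xs) ^ γ := by
      rw [← Real.mul_rpow hxs0.le hu.le]; congr 1; field_simp
    have E2 : y ^ m = xs ^ m * (y/xs) ^ m := by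
      rw [← Real.mul_rpow hxs0.le hu.le]; congr 1; field_simp
    have E3 : xs ^ (γ - m) * xs ^ m = xs ^ γ := by
      rw [← Real.rpow_add hxs0]; congr 1; ring
    have hyo := young (y/xs) hu.le
    have hcpos : 0 < (K₂ - K₁) * xs ^ γ := mul_pos hδ (Real.rpow_pos_of_pos hxs0 γ)
    have h2 := mul_le_mul_of_nonneg_left hyo hcpos.le
    have hgoal_eq : (K₂ - K₁) * y ^ γ - A * y ^ m
        = ((K₂ - K₁) * xs ^ γ) * (y/xs) ^ γ - ((K₂ - K₁) * xs ^ γ) * ((γ/m) * (y/xs) ^ m) := by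
      rw [E1, E2, hA]
      linear_combination (-(K₂ - K₁) * (γ/m) * (y/xs)^m) * E3
    have hc12' : ((K₂ - K₁) * xs ^ γ) * (1 - γ/m) = c12 := by
      have hmne : m ≠ 0 := hm0.ne'
      field_simp
      linear_combination hc12eq
    linarith [h2, hgoal_eq, hc12']
  -- inequality: for y ≤ xs, A y^m ≤ δ y^γ
  have ineq1 : ∀ y : ℝ, 0 < y → y ≤ xs → A * y ^ m ≤ (K₂ - K₁) * y ^ γ := by
    intro y hy hyx
    have h1 : y ^ (m-γ) ≤ xs ^ (m-γ) := Real.rpow_le_rpow hy.le hyx hmγ'.le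
    have hxp : 0 < xs ^ (m-γ) := Real.rpow_pos_of_pos hxs0 _
    have e : xs ^ (γ-m) = (xs ^ (m-γ))⁻¹ := by
      rw [← Real.rpow_neg hxs0.le]; congr 1; ring
    have h2 : xs ^ (γ-m) * y ^ (m-γ) ≤ 1 := by
      rw [e]
      calc (xs^(m-γ))⁻¹ * y^(m-γ) ≤ (xs^(m-γ))⁻¹ * xs^(m-γ) :=
            mul_le_mul_of_nonneg_left h1 (inv_nonneg.2 hxp.le)
        _ = 1 := inv_mul_cancel₀ hxp.ne'
    have h3 : y ^ (m-γ) * y ^ γ = y ^ m := by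
      rw [← Real.rpow_add hy]; congr 1; ring
    have hyγ : 0 < y ^ γ := Real.rpow_pos_of_pos hy _
    have hcoef : 0 < (K₂ - K₁) * (γ/m) * y ^ γ :=
      mul_pos (mul_pos hδ (div_pos hγ0 hm0)) hyγ
    have h4 := mul_le_mul_of_nonneg_left h2 hcoef.le
    rw [mul_one] at h4
    have hAy : A * y ^ m = ((K₂ - K₁) * (γ/m) * y ^ γ) * (xs ^ (γ-m) * y ^ (m-γ)) := by
      rw [hA]
      linear_combination ((K₂ - K₁) * (γ/m) * xs^(γ-m)) * h3.symm
    have hdm : γ/m ≤ 1 := (div_le_one hm0).2 hmγ.le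
    have h5 := mul_le_mul_of_nonneg_right
      (mul_le_mul_of_nonneg_left hdm hδ.le) hyγ.le
    rw [mul_one] at h5
    rw [hAy]
    linarith [h4, h5]
  -- inequality: for xs ≤ y, r c12 ≤ y^γ (K₂ d₁ - 1)
  have ineq3 : ∀ y : ℝ, xs ≤ y →
      r * c12 ≤ y ^ γ * (K₂ * (r - b11*γ + (1/2)*σ11^2*γ*(1-γ)) - 1) := by
    intro y hyx
    have hmono : xs ^ γ ≤ y ^ γ := Real.rpow_le_rpow hxs0.le hyx hγ0.le
    have hK2d1 : K₂ * (r - b11*γ + (1/2)*σ11^2*γ*(1-γ)) - 1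
        = (K₂ - K₁) * (r - b11*γ + (1/2)*σ11^2*γ*(1-γ)) := by
      linear_combination hK1d
    have hcoef : 0 ≤ K₂ * (r - b11*γ + (1/2)*σ11^2*γ*(1-γ)) - 1 := by
      rw [hK2d1]; exact (mul_nonneg hδ.le hd11.le)
    have h7 : m * (r - b11*γ + (1/2)*σ11^2*γ*(1-γ)) - r*(m-γ)
        = (1/2)*γ*σ11^2*m*(m-γ) := by
      linear_combination (-γ)*hQm
    have hpos7 : 0 < (1/2)*γ*σ11^2*m*(m-γ) := by
      have h := mul_pos (mul_pos (mul_pos hγ0 hσ2) hm0) hmγ'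
      linarith only [h]
    have h7' : r*(m-γ) ≤ m * (r - b11*γ + (1/2)*σ11^2*γ*(1-γ)) := by
      linarith only [h7, hpos7]
    have hcc : 0 < xs ^ γ * (K₂ - K₁) / m :=
      div_pos (mul_pos (Real.rpow_pos_of_pos hxs0 γ) hδ) hm0
    have h8 := mul_le_mul_of_nonneg_left h7' hcc.le
    have hL : (xs ^ γ * (K₂ - K₁) / m) * (r*(m-γ)) = r * c12 := by
      have e : (xs ^ γ * (K₂ - K₁) / m) * (r*(m-γ)) = (r/m) * ((K₂ - K₁) * xs ^ γ * (m-γ)) := by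
        ring
      rw [e, hc12eq]
      field_simp
    have hR : (xs ^ γ * (K₂ - K₁) / m) * (m * (r - b11*γ + (1/2)*σ11^2*γ*(1-γ)))
        = xs ^ γ * (K₂ * (r - b11*γ + (1/2)*σ11^2*γ*(1-γ)) - 1) := by
      rw [hK2d1]
      have hmne : m ≠ 0 := hm0.ne'
      field_simp
    have hstep : r * c12 ≤ xs ^ γ * (K₂ * (r - b11*γ + (1/2)*σ11^2*γ*(1-γ)) - 1) := by
      rw [← hL, ← hR]; exact h8
    calc r * c12 ≤ xs ^ γ * (K₂ * (r - b11*γ + (1/2)*σ11^2*γ*(1-γ)) - 1) := hstep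
      _ ≤ y ^ γ * (K₂ * (r - b11*γ + (1/2)*σ11^2*γ*(1-γ)) - 1) :=
          mul_le_mul_of_nonneg_right hmono hcoef
  -- PDE identities
  have hLg1 : r * (K₁*x^γ + A*x^m) - Lop b11 σ11 (fun z : ℝ => K₁ * z ^ γ + A * z ^ m) x - x^γ
      = 0 := by
    rw [lop_twoPow _ _ _ _ _ _ _ hx]
    linear_combination (x^γ) * hK1d - (A*x^m) * hQm
  have hg2fun : (fun z : ℝ => K₂ * z ^ γ - c12) = (fun z : ℝ => K₂ * z ^ γ + (-c12) * z ^ (0:ℝ)) := by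
    funext z; rw [Real.rpow_zero]; ring
  have hLg2 : r * (K₂*x^γ - c12) - Lop b11 σ11 (fun z : ℝ => K₂ * z ^ γ - c12) x - x^γ
      = x^γ * (K₂ * (r - b11*γ + (1/2)*σ11^2*γ*(1-γ)) - 1) - r*c12 := by
    rw [hg2fun, lop_twoPow _ _ _ _ _ _ _ hx]
    ring
  have hh2fun : (fun z : ℝ => K₂ * z ^ γ) = (fun z : ℝ => K₂ * z ^ γ + 0 * z ^ (0:ℝ)) := by
    funext z; ring
  have hLh2 : r * (K₂*x^γ) - Lop b21 σ21 (fun z : ℝ => K₂ * z ^ γ) x - x^γ = 0 := by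
    rw [hh2fun, lop_twoPow _ _ _ _ _ _ _ hx]
    linear_combination (x^γ) * hK2d
  -- case split on position of x relative to xs
  unfold solvesQVI
  rw [heqb12, heqσ12, heqb22, heqσ22]
  rcases lt_or_gt_of_ne hxx with hlt | hgt
  · -- x < xs : continuation region for regime 1
    have hev : (fun y : ℝ => if y < xs then K₁ * y ^ γ + A * y ^ m else K₂ * y ^ γ - c12)
        =ᶠ[nhds x] (fun z : ℝ => K₁ * z ^ γ + A * z ^ m) := by
      filter_upwards [Iio_mem_nhds hlt] with y hy
      simp only [Set.mem_Iio] at hy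
      rw [if_pos hy]
    have hLeq1 : Lop b11 σ11
        (fun y : ℝ => if y < xs then K₁ * y ^ γ + A * y ^ m else K₂ * y ^ γ - c12) x
        = Lop b11 σ11 (fun z : ℝ => K₁ * z ^ γ + A * z ^ m) x := Lop_congr' hev
    have hobs : (0:ℝ) ≤ K₁*x^γ + A*x^m - (K₂*x^γ - c12) := by
      have := ineq2 x hx
      linarith
    have hobs2 : (0:ℝ) ≤ K₂*x^γ - (K₁*x^γ + A*x^m - c21) := by
      have := ineq1 x hx hlt.le
      linarith
    refine ⟨?_, ?_, ?_, ?_⟩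
    · simp only [if_pos hlt, hLeq1]
      rw [hLg1, min_eq_left hobs, max_eq_left (by linarith : K₁*x^γ + A*x^m - (K₁*x^γ + A*x^m + χ12) ≤ (0:ℝ))]
    · simp only [if_pos hlt, hLeq1]
      rw [hLg1, min_eq_left hobs, max_eq_left (by linarith : K₁*x^γ + A*x^m - (K₁*x^γ + A*x^m + χ21) ≤ (0:ℝ))]
    · simp only [if_pos hlt]
      rw [hLh2, min_eq_left hobs2, max_eq_left (by linarith : K₂*x^γ - (K₂*x^γ + χ12) ≤ (0:ℝ))]
    · simp only [if_pos hlt]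
      rw [hLh2, min_eq_left hobs2, max_eq_left (by linarith : K₂*x^γ - (K₂*x^γ + χ21) ≤ (0:ℝ))]
  · -- xs < x : stopping region for regime 1
    have hge : ¬ (x < xs) := not_lt.2 hgt.le
    have hev : (fun y : ℝ => if y < xs then K₁ * y ^ γ + A * y ^ m else K₂ * y ^ γ - c12)
        =ᶠ[nhds x] (fun z : ℝ => K₂ * z ^ γ - c12) := by
      filter_upwards [Ioi_mem_nhds hgt] with y hy
      simp only [Set.mem_Ioi] at hy
      rw [if_neg (not_lt.2 hy.le)]
    have hLeq2 : Lop b11 σ11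
        (fun y : ℝ => if y < xs then K₁ * y ^ γ + A * y ^ m else K₂ * y ^ γ - c12) x
        = Lop b11 σ11 (fun z : ℝ => K₂ * z ^ γ - c12) x := Lop_congr' hev
    have hpde : (0:ℝ) ≤ r * (K₂*x^γ - c12) - Lop b11 σ11 (fun z : ℝ => K₂ * z ^ γ - c12) x - x^γ := by
      rw [hLg2]
      have := ineq3 x hgt.le
      linarith
    have hzero : K₂*x^γ - c12 - (K₂*x^γ - c12) = (0:ℝ) := by ring
    refine ⟨?_, ?_, ?_, ?_⟩
    · simp only [if_neg hge, hLeq2]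
      rw [min_eq_right (by linarith : K₂*x^γ - c12 - (K₂*x^γ - c12) ≤ r * (K₂*x^γ - c12) - Lop b11 σ11 (fun z : ℝ => K₂ * z ^ γ - c12) x - x^γ),
        hzero, max_eq_left (by linarith : K₂*x^γ - c12 - (K₂*x^γ - c12 + χ12) ≤ (0:ℝ))]
    · simp only [if_neg hge, hLeq2]
      rw [min_eq_right (by linarith : K₂*x^γ - c12 - (K₂*x^γ - c12) ≤ r * (K₂*x^γ - c12) - Lop b11 σ11 (fun z : ℝ => K₂ * z ^ γ - c12) x - x^γ),
        hzero, max_eq_left (by linarith : K₂*x^γ - c12 - (K₂*x^γ - c12 + χ21) ≤ (0:ℝ))]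
    · simp only [if_neg hge]
      rw [hLh2, min_eq_left (by linarith : (0:ℝ) ≤ K₂*x^γ - (K₂*x^γ - c12 - c21)),
        max_eq_left (by linarith : K₂*x^γ - (K₂*x^γ + χ12) ≤ (0:ℝ))]
    · simp only [if_neg hge]
      rw [hLh2, min_eq_left (by linarith : (0:ℝ) ≤ K₂*x^γ - (K₂*x^γ - c12 - c21)),
        max_eq_left (by linarith : K₂*x^γ - (K₂*x^γ + χ21) ≤ (0:ℝ))]
end

section
/- Theorem 4.2, case B4. In addition to the common setup, assume b11 = b12, σ11 = σ12, b21 = b22, σ21 = σ22, and K₁ := K_{11} = K_{12} < K_{21} = K_{22} =: K₂; assume c12 < 0, c21 > 0, χ12 < 0, χ21 > 0, c12 + c21 > 0 and χ12 + χ21 > 0 (Condition B4). Then the quadruple v11(x) = K₂·x^γ − c12 + χ12, v12(x) = K₂·x^γ − c12, v21(x) = K₂·x^γ + χ12, v22(x) = K₂·x^γ solves the QVI system at every x > 0. -/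
lemma deriv_pow_aux (K γ C : ℝ) {x : ℝ} (hx : 0 < x) :
    deriv (fun y : ℝ => K * y ^ γ + C) x = K * (γ * x ^ (γ - 1)) :=
  (((Real.hasDerivAt_rpow_const (Or.inl hx.ne')).const_mul K).add_const C).deriv

lemma deriv2_aux (K γ C : ℝ) {x : ℝ} (hx : 0 < x) :
    deriv (deriv (fun y : ℝ => K * y ^ γ + C)) x = K * (γ * ((γ - 1) * x ^ (γ - 1 - 1))) := by
  have hev : deriv (fun y : ℝ => K * y ^ γ + C) =ᶠ[nhds x] fun y => K * (γ * y ^ (γ - 1)) := by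
    filter_upwards [eventually_gt_nhds hx] with y hy
    exact deriv_pow_aux K γ C hy
  rw [hev.deriv_eq]
  exact (((Real.hasDerivAt_rpow_const (Or.inl hx.ne')).const_mul γ).const_mul K).deriv

lemma Lop_aux (b σ K γ C : ℝ) {x : ℝ} (hx : 0 < x) :
    Lop b σ (fun y : ℝ => K * y ^ γ + C) x
      = K * x ^ γ * (b * γ - (1/2) * σ^2 * γ * (1 - γ)) := by
  unfold Lop
  rw [deriv_pow_aux K γ C hx, deriv2_aux K γ C hx]
  have hx2 : x ^ (2:ℕ) * x ^ (γ - 1 - 1) = x ^ γ := by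
    rw [← Real.rpow_natCast x 2, ← Real.rpow_add hx]
    ring_nf
  have hx1 : x * x ^ (γ - 1) = x ^ γ := by
    nth_rewrite 1 [← Real.rpow_one x]
    rw [← Real.rpow_add hx]
    norm_num
  linear_combination ((1/2) * σ^2 * K * γ * (γ - 1)) * hx2 + (b * K * γ) * hx1

set_option maxHeartbeats 1600000 in
theorem thm4_2_B4
    (r γ c12 c21 χ12 χ21 : ℝ)
    (b11 σ11 b12 σ12 b21 σ21 b22 σ22 : ℝ)
    (K11 K12 K21 K22 : ℝ)
    (hr : 0 < r) (hγ0 : 0 < γ) (hγ1 : γ < 1)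
    (hσ11 : 0 < σ11) (hσ12 : 0 < σ12) (hσ21 : 0 < σ21) (hσ22 : 0 < σ22)
    (hd11 : 0 < r - b11*γ + (1/2)*σ11^2*γ*(1-γ))
    (hd12 : 0 < r - b12*γ + (1/2)*σ12^2*γ*(1-γ))
    (hd21 : 0 < r - b21*γ + (1/2)*σ21^2*γ*(1-γ))
    (hd22 : 0 < r - b22*γ + (1/2)*σ22^2*γ*(1-γ))
    (hrb11 : b11 < r) (hrb12 : b12 < r) (hrb21 : b21 < r) (hrb22 : b22 < r)
    (hK11 : K11 = 1/(r - b11*γ + (1/2)*σ11^2*γ*(1-γ)))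
    (hK12 : K12 = 1/(r - b12*γ + (1/2)*σ12^2*γ*(1-γ)))
    (hK21 : K21 = 1/(r - b21*γ + (1/2)*σ21^2*γ*(1-γ)))
    (hK22 : K22 = 1/(r - b22*γ + (1/2)*σ22^2*γ*(1-γ)))
    (heqb12 : b12 = b11) (heqσ12 : σ12 = σ11)
    (heqb22 : b22 = b21) (heqσ22 : σ22 = σ21)
    (K₁ K₂ : ℝ) (hK₁ : K₁ = K11) (hK₂ : K₂ = K21)
    (hKlt : K₁ < K₂)
    (hc12 : c12 < 0) (hc21 : 0 < c21) (hχ12 : χ12 < 0) (hχ21 : 0 < χ21)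
    (hcsum : 0 < c12 + c21) (hχsum : 0 < χ12 + χ21)
    :
    ∀ x : ℝ, 0 < x →
      solvesQVI r γ c12 c21 χ12 χ21 b11 σ11 b12 σ12 b21 σ21 b22 σ22
        (fun y => K₂ * y ^ γ - c12 + χ12)
        (fun y => K₂ * y ^ γ - c12)
        (fun y => K₂ * y ^ γ + χ12)
        (fun y => K₂ * y ^ γ) x := by
  intro x hx
  simp only [solvesQVI, heqb12, heqσ12, heqb22, heqσ22]
  have hxγ : (0:ℝ) < x ^ γ := Real.rpow_pos_of_pos hx γ
  have hK2pos : 0 < K₂ := by rw [hK₂, hK21]; positivity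
  have hdlt : r - b21*γ + (1/2)*σ21^2*γ*(1-γ) < r - b11*γ + (1/2)*σ11^2*γ*(1-γ) := by
    rw [hK₁, hK11, hK₂, hK21] at hKlt
    exact lt_of_one_div_lt_one_div hd11 hKlt
  have hK2d2 : K₂ * (r - b21*γ + (1/2)*σ21^2*γ*(1-γ)) = 1 := by
    rw [hK₂, hK21, one_div, inv_mul_cancel₀ hd21.ne']
  have hK2d1 : 1 < K₂ * (r - b11*γ + (1/2)*σ11^2*γ*(1-γ)) := by
    nlinarith [mul_lt_mul_of_pos_left hdlt hK2pos]
  have key1 : x ^ γ < K₂ * (r - b11*γ + (1/2)*σ11^2*γ*(1-γ)) * x ^ γ := by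
    have h := mul_lt_mul_of_pos_right hK2d1 hxγ
    linarith
  have key2 : K₂ * (r - b21*γ + (1/2)*σ21^2*γ*(1-γ)) * x ^ γ = x ^ γ := by
    rw [hK2d2, one_mul]
  have e11 : (fun y : ℝ => K₂ * y ^ γ - c12 + χ12) = fun y : ℝ => K₂ * y ^ γ + (-c12 + χ12) := by
    funext y; ring
  have e12 : (fun y : ℝ => K₂ * y ^ γ - c12) = fun y : ℝ => K₂ * y ^ γ + (-c12) := by
    funext y; ring
  have e22 : (fun y : ℝ => K₂ * y ^ γ) = fun y : ℝ => K₂ * y ^ γ + 0 := by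
    funext y; ring
  have L11 : Lop b11 σ11 (fun y : ℝ => K₂ * y ^ γ - c12 + χ12) x
      = K₂ * x ^ γ * (b11 * γ - (1/2) * σ11^2 * γ * (1 - γ)) := by
    rw [e11, Lop_aux _ _ _ _ _ hx]
  have L12 : Lop b11 σ11 (fun y : ℝ => K₂ * y ^ γ - c12) x
      = K₂ * x ^ γ * (b11 * γ - (1/2) * σ11^2 * γ * (1 - γ)) := by
    rw [e12, Lop_aux _ _ _ _ _ hx]
  have L21 : Lop b21 σ21 (fun y : ℝ => K₂ * y ^ γ + χ12) x
      = K₂ * x ^ γ * (b21 * γ - (1/2) * σ21^2 * γ * (1 - γ)) :=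
    Lop_aux _ _ _ _ _ hx
  have L22 : Lop b21 σ21 (fun y : ℝ => K₂ * y ^ γ) x
      = K₂ * x ^ γ * (b21 * γ - (1/2) * σ21^2 * γ * (1 - γ)) := by
    rw [e22, Lop_aux _ _ _ _ _ hx]
  have hrc12 : r * c12 < 0 := mul_neg_of_pos_of_neg hr hc12
  have hrχ12 : r * χ12 < 0 := mul_neg_of_pos_of_neg hr hχ12
  refine ⟨?_, ?_, ?_, ?_⟩
  · -- v11
    simp only [L11]
    apply le_antisymm
    · apply max_le
      · exact (min_le_right _ _).trans (le_of_eq (by ring))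
      · exact le_of_eq (by ring)
    · exact le_trans (le_of_eq (by ring)) (le_max_right _ _)
  · -- v12
    simp only [L12]
    apply le_antisymm
    · apply max_le
      · exact (min_le_right _ _).trans (le_of_eq (by ring))
      · linarith
    · refine le_trans (le_min ?_ (le_of_eq (by ring))) (le_max_left _ _)
      linarith [key1]
  · -- v21
    simp only [L21]
    apply le_antisymm
    · apply max_le
      · refine (min_le_left _ _).trans ?_
        linarith [key2]
      · exact le_of_eq (by ring)
    · exact le_trans (le_of_eq (by ring)) (le_max_right _ _)
  · -- v22
    simp only [L22]
    apply le_antisymm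
    · apply max_le
      · refine (min_le_left _ _).trans ?_
        linarith [key2]
      · linarith
    · refine le_trans (le_min ?_ (by linarith)) (le_max_left _ _)
      linarith [key2]
end

section
/- Theorem 4.4, case B2. In addition to the common setup, assume b11 = b21, σ11 = σ21, b12 = b22, σ12 = σ22, and K₁ := K_{11} = K_{21} < K_{12} = K_{22} =: K₂; assume c12 < 0, c21 > 0, χ12 > 0, χ21 > 0 and c12 + c21 > 0 (Condition B2). Let m⁺ := m_{12}⁺ (= m_{22}⁺), x* := (m⁺·χ21 / ((m⁺ − γ)·(K₂ − K₁)))^{1/γ} and A := −(K₂ − K₁)·(γ/m⁺)·(x*)^{γ − m⁺}. Define v11(x) = K₁·x^γ − c12 and v21(x) = K₁·x^γ for all x > 0; v12(x) = K₂·x^γ + A·x^{m⁺} − c12 for 0 < x < x* and = K₁·x^γ − c12 + χ21 for x ≥ x*; and v22(x) = K₂·x^γ + A·x^{m⁺} for 0 < x < x* and = K₁·x^γ + χ21 for x ≥ x*. Then this quadruple solves the QVI system at every x > 0 with x ≠ x*. -/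
lemma hasDerivAt_aux (c₁ p c₂ q c₃ : ℝ) {x : ℝ} (hx : 0 < x) :
    HasDerivAt (fun y : ℝ => c₁ * y ^ p + c₂ * y ^ q + c₃)
      (c₁ * p * x ^ (p - 1) + c₂ * q * x ^ (q - 1) + 0) x := by
  have h1 := (Real.hasDerivAt_rpow_const (p := p) (Or.inl hx.ne')).const_mul c₁
  have h2 := (Real.hasDerivAt_rpow_const (p := q) (Or.inl hx.ne')).const_mul c₂
  have h := (h1.add h2).add_const c₃
  exact h.congr_deriv (by ring)

lemma lop_aux (b σ c₁ p c₂ q c₃ : ℝ) {x : ℝ} (hx : 0 < x) :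
    Lop b σ (fun y => c₁ * y ^ p + c₂ * y ^ q + c₃) x
      = c₁ * (b * p + σ^2/2 * p * (p-1)) * x ^ p
        + c₂ * (b * q + σ^2/2 * q * (q-1)) * x ^ q := by
  have hev : Set.EqOn (deriv (fun y : ℝ => c₁ * y ^ p + c₂ * y ^ q + c₃))
      (fun y : ℝ => c₁ * p * y ^ (p-1) + c₂ * q * y ^ (q-1) + 0) (Set.Ioi 0) := by
    intro y hy
    exact (hasDerivAt_aux c₁ p c₂ q c₃ hy).deriv
  have h2 : deriv (deriv (fun y : ℝ => c₁ * y ^ p + c₂ * y ^ q + c₃)) x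
      = deriv (fun y : ℝ => c₁ * p * y ^ (p-1) + c₂ * q * y ^ (q-1) + 0) x :=
    Filter.EventuallyEq.deriv_eq (Filter.eventuallyEq_of_mem (Ioi_mem_nhds hx) hev)
  have e1p : x * x ^ (p-1) = x ^ p := by
    rw [show x * x ^ (p-1) = x ^ (1:ℝ) * x ^ (p-1) by rw [Real.rpow_one],
      ← Real.rpow_add hx, show (1:ℝ) + (p-1) = p by ring]
  have e1q : x * x ^ (q-1) = x ^ q := by
    rw [show x * x ^ (q-1) = x ^ (1:ℝ) * x ^ (q-1) by rw [Real.rpow_one],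
      ← Real.rpow_add hx, show (1:ℝ) + (q-1) = q by ring]
  have e2p : x ^ (2:ℕ) * x ^ (p-1-1) = x ^ p := by
    rw [show x ^ (2:ℕ) = x ^ (2:ℝ) by rw [Real.rpow_two],
      ← Real.rpow_add hx, show (2:ℝ) + (p-1-1) = p by ring]
  have e2q : x ^ (2:ℕ) * x ^ (q-1-1) = x ^ q := by
    rw [show x ^ (2:ℕ) = x ^ (2:ℝ) by rw [Real.rpow_two],
      ← Real.rpow_add hx, show (2:ℝ) + (q-1-1) = q by ring]
  rw [Lop, h2, (hasDerivAt_aux (c₁*p) (p-1) (c₂*q) (q-1) 0 hx).deriv,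
    (hasDerivAt_aux c₁ p c₂ q c₃ hx).deriv]
  linear_combination (σ^2/2 * (c₁*p*(p-1))) * e2p + (σ^2/2 * (c₂*q*(q-1))) * e2q
    + (b*c₁*p) * e1p + (b*c₂*q) * e1q

lemma lop_congr {b σ : ℝ} {v g : ℝ → ℝ} {s : Set ℝ} (hs : IsOpen s) {x : ℝ} (hx : x ∈ s)
    (h : Set.EqOn v g s) : Lop b σ v x = Lop b σ g x := by
  have h1 : Set.EqOn (deriv v) (deriv g) s := fun y hy =>
    (Filter.eventuallyEq_of_mem (hs.mem_nhds hy) h).deriv_eq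
  have h2 : deriv (deriv v) x = deriv (deriv g) x :=
    (Filter.eventuallyEq_of_mem (hs.mem_nhds hx) h1).deriv_eq
  rw [Lop, Lop, h2, h1 hx]

lemma pde_eval (b σ r γ K c₂ q c₃ : ℝ) {x : ℝ} (hx : 0 < x)
    (hK : K * (r - b*γ + (1/2)*σ^2*γ*(1-γ)) = 1)
    (hq : c₂ * (σ^2/2*q*(q-1) + b*q - r) = 0) :
    r * (K * x ^ γ + c₂ * x ^ q + c₃) - Lop b σ (fun y => K * y ^ γ + c₂ * y ^ q + c₃) x - x ^ γ
      = r * c₃ := by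
  rw [lop_aux b σ K γ c₂ q c₃ hx]
  linear_combination (x ^ γ) * hK - (x ^ q) * hq

lemma qviA {a b c : ℝ} (ha : 0 ≤ a) (hb : b = 0) (hc : c ≤ 0) : max (min a b) c = 0 := by
  subst hb; rw [min_eq_right ha]; exact max_eq_left hc

lemma qviC {a b c : ℝ} (ha : a = 0) (hb : 0 ≤ b) (hc : c ≤ 0) : max (min a b) c = 0 := by
  subst ha; rw [min_eq_left hb]; exact max_eq_left hc

lemma qviB1 {a b c : ℝ} (ha : a ≤ 0) (hc : c = 0) : max (min a b) c = 0 := by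
  subst hc; exact max_eq_right ((min_le_left a b).trans ha)

lemma qviB2 {a b c : ℝ} (hb : b ≤ 0) (hc : c = 0) : max (min a b) c = 0 := by
  subst hc; exact max_eq_right ((min_le_right a b).trans hb)
set_option maxHeartbeats 2000000 in
theorem thm4_4_B2
    (r γ c12 c21 χ12 χ21 : ℝ)
    (b11 σ11 b12 σ12 b21 σ21 b22 σ22 : ℝ)
    (K11 K12 K21 K22 : ℝ)
    (hr : 0 < r) (hγ0 : 0 < γ) (hγ1 : γ < 1)
    (hσ11 : 0 < σ11) (hσ12 : 0 < σ12) (hσ21 : 0 < σ21) (hσ22 : 0 < σ22)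
    (hd11 : 0 < r - b11*γ + (1/2)*σ11^2*γ*(1-γ))
    (hd12 : 0 < r - b12*γ + (1/2)*σ12^2*γ*(1-γ))
    (hd21 : 0 < r - b21*γ + (1/2)*σ21^2*γ*(1-γ))
    (hd22 : 0 < r - b22*γ + (1/2)*σ22^2*γ*(1-γ))
    (hrb11 : b11 < r) (hrb12 : b12 < r) (hrb21 : b21 < r) (hrb22 : b22 < r)
    (hK11 : K11 = 1/(r - b11*γ + (1/2)*σ11^2*γ*(1-γ)))
    (hK12 : K12 = 1/(r - b12*γ + (1/2)*σ12^2*γ*(1-γ)))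
    (hK21 : K21 = 1/(r - b21*γ + (1/2)*σ21^2*γ*(1-γ)))
    (hK22 : K22 = 1/(r - b22*γ + (1/2)*σ22^2*γ*(1-γ)))
    (heqb21 : b21 = b11) (heqσ21 : σ21 = σ11)
    (heqb22 : b22 = b12) (heqσ22 : σ22 = σ12)
    (K₁ K₂ : ℝ) (hK₁ : K₁ = K11) (hK₂ : K₂ = K12)
    (hKlt : K₁ < K₂)
    (m : ℝ) (hm : m = 1/2 - b12/σ12^2 + Real.sqrt ((1/2 - b12/σ12^2)^2 + 2*r/σ12^2))
    (xs A : ℝ)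
    (hxs : xs = (m * χ21 / ((m - γ) * (K₂ - K₁))) ^ (1/γ))
    (hA : A = -(K₂ - K₁) * (γ / m) * xs ^ (γ - m))
    (hc12 : c12 < 0) (hc21 : 0 < c21) (hχ12 : 0 < χ12) (hχ21 : 0 < χ21)
    (hcsum : 0 < c12 + c21)
    :
    ∀ x : ℝ, 0 < x → x ≠ xs →
      solvesQVI r γ c12 c21 χ12 χ21 b11 σ11 b12 σ12 b21 σ21 b22 σ22
        (fun y => K₁ * y ^ γ - c12)
        (fun y => if y < xs then K₂ * y ^ γ + A * y ^ m - c12 else K₁ * y ^ γ - c12 + χ21)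
        (fun y => K₁ * y ^ γ)
        (fun y => if y < xs then K₂ * y ^ γ + A * y ^ m else K₁ * y ^ γ + χ21) x := by

  rw [heqb21, heqσ21, heqb22, heqσ22]
  -- basic positivity
  have hK₁eq : K₁ * (r - b11*γ + (1/2)*σ11^2*γ*(1-γ)) = 1 := by
    rw [hK₁, hK11, one_div, inv_mul_cancel₀ hd11.ne']
  have hK₂eq : K₂ * (r - b12*γ + (1/2)*σ12^2*γ*(1-γ)) = 1 := by
    rw [hK₂, hK12, one_div, inv_mul_cancel₀ hd12.ne']
  have hK₂pos : 0 < K₂ := by rw [hK₂, hK12]; exact one_div_pos.2 hd12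
  have hσ2 : (σ12:ℝ)^2 ≠ 0 := by positivity
  have hb' : σ12^2 * (b12/σ12^2) = b12 := mul_div_cancel₀ _ hσ2
  have hr' : σ12^2 * (2*r/σ12^2) = 2*r := mul_div_cancel₀ _ hσ2
  -- m is a root and m > γ
  have hs2 : (m - (1/2 - b12/σ12^2))^2 = (1/2 - b12/σ12^2)^2 + 2*r/σ12^2 := by
    rw [hm, add_sub_cancel_left]
    exact Real.sq_sqrt (by positivity)
  have hQ : σ12^2/2 * m * (m-1) + b12 * m = r := by
    linear_combination (σ12^2/2) * hs2 - m * hb' + (1/2) * hr'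
  have h5 : (γ - (1/2 - b12/σ12^2))^2 < (1/2 - b12/σ12^2)^2 + 2*r/σ12^2 := by
    have hσpos : (0:ℝ) < σ12^2 := by positivity
    have key : σ12^2 * ((γ - (1/2 - b12/σ12^2))^2 - ((1/2 - b12/σ12^2)^2 + 2*r/σ12^2))
        = σ12^2*γ^2 - σ12^2*γ + 2*γ*b12 - 2*r := by
      field_simp; ring
    have h7 : σ12^2*γ^2 - σ12^2*γ + 2*γ*b12 - 2*r < 0 := by linarith [hd12]
    have h8 : σ12^2 * ((γ - (1/2 - b12/σ12^2))^2 - ((1/2 - b12/σ12^2)^2 + 2*r/σ12^2)) < 0 := by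
      rw [key]; exact h7
    rcases mul_neg_iff.mp h8 with ⟨_, h⟩ | ⟨h, _⟩
    · linarith
    · linarith
  have hmγ : γ < m := by
    have h6 := Real.lt_sqrt_of_sq_lt h5
    rw [hm]; linarith
  have hm0 : 0 < m := hγ0.trans hmγ
  have hKsub : 0 < K₂ - K₁ := sub_pos.2 hKlt
  have hbase : 0 < m * χ21 / ((m - γ) * (K₂ - K₁)) :=
    div_pos (mul_pos hm0 hχ21) (mul_pos (sub_pos.2 hmγ) hKsub)
  have hxsp : 0 < xs := by rw [hxs]; exact Real.rpow_pos_of_pos hbase _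
  have hxsγ : xs ^ γ = m * χ21 / ((m - γ) * (K₂ - K₁)) := by
    rw [hxs, ← Real.rpow_mul hbase.le, one_div, inv_mul_cancel₀ hγ0.ne', Real.rpow_one]
  have hχeq : (m - γ) * (K₂ - K₁) * xs ^ γ = m * χ21 := by
    have hDne : ((m - γ) * (K₂ - K₁)) ≠ 0 := (mul_pos (sub_pos.2 hmγ) hKsub).ne'
    rw [hxsγ, mul_div_cancel₀ _ hDne]
  have hAneg : A < 0 := by
    rw [hA]
    have h3 : (0:ℝ) < (K₂-K₁) * (γ/m) * xs ^ (γ-m) :=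
      mul_pos (mul_pos hKsub (div_pos hγ0 hm0)) (Real.rpow_pos_of_pos hxsp (γ - m))
    linarith
  have hts : xs ^ (γ-m) * xs ^ (m-γ) = 1 := by
    rw [← Real.rpow_add hxsp, show (γ-m) + (m-γ) = 0 by ring, Real.rpow_zero]
  have htT : xs ^ (γ-m) * xs ^ m = xs ^ γ := by
    rw [← Real.rpow_add hxsp, show (γ-m) + m = γ by ring]
  -- Young's inequality: φ(x) ≤ χ21 for all x > 0
  have hYoung : ∀ z : ℝ, 0 < z → (K₂ - K₁) * z ^ γ + A * z ^ m ≤ χ21 := by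
    intro z hz
    have hy0 : (0:ℝ) ≤ γ / m := (div_pos hγ0 hm0).le
    have hy1 : γ / m ≤ 1 := by rw [div_le_one hm0]; exact hmγ.le
    have hg := Real.geom_mean_le_arith_mean2_weighted (w₁ := γ/m) (w₂ := 1 - γ/m)
      (p₁ := z^m) (p₂ := xs^m) hy0 (by linarith)
      (Real.rpow_nonneg hz.le m) (Real.rpow_nonneg hxsp.le m) (by ring)
    have hgl : (z ^ m) ^ (γ/m) = z ^ γ := by
      rw [← Real.rpow_mul hz.le, show m * (γ/m) = γ by field_simp]
    have hgr : (xs ^ m) ^ (1 - γ/m) = xs ^ (m - γ) := by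
      rw [← Real.rpow_mul hxsp.le, show m * (1 - γ/m) = m - γ by field_simp]
    rw [hgl, hgr] at hg
    -- hg : z^γ * xs^(m-γ) ≤ γ/m * z^m + (1 - γ/m) * xs^m
    have hY' := mul_le_mul_of_nonneg_left hg
      (mul_nonneg hKsub.le (Real.rpow_nonneg hxsp.le (γ-m)))
    have e1 : (K₂-K₁) * xs^(γ-m) * (z^γ * xs^(m-γ)) = (K₂-K₁) * z^γ := by
      linear_combination ((K₂-K₁) * z^γ) * hts
    have e2 : (K₂-K₁) * xs^(γ-m) * (γ/m * z^m + (1 - γ/m) * xs^m)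
        = -A * z^m + (1 - γ/m) * ((K₂-K₁) * xs^γ) := by
      linear_combination (z^m) * hA + ((1 - γ/m) * (K₂-K₁)) * htT
    have e3 : (1 - γ/m) * ((K₂-K₁) * xs^γ) = χ21 := by
      have hmne : m ≠ 0 := hm0.ne'
      field_simp
      linear_combination hχeq
    rw [e1, e2] at hY'
    linarith [hY', e3]
  -- lower bound: φ ≥ 0 on (0, xs)
  have hphilow : ∀ z : ℝ, 0 < z → z < xs → 0 ≤ (K₂ - K₁) * z ^ γ + A * z ^ m := by
    intro z hz hzxs
    have h1 : z ^ (m-γ) ≤ xs ^ (m-γ) := Real.rpow_le_rpow hz.le hzxs.le (by linarith)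
    have h2 : A * xs ^ (m-γ) ≤ A * z ^ (m-γ) := mul_le_mul_of_nonpos_left h1 hAneg.le
    have h3 : A * xs ^ (m-γ) = -((K₂-K₁) * (γ/m)) := by
      linear_combination (xs ^ (m-γ)) * hA + (-((K₂-K₁) * (γ/m))) * hts
    have h4 : z ^ (m-γ) * z ^ γ = z ^ m := by
      rw [← Real.rpow_add hz, show (m-γ)+γ = m by ring]
    have hzγ : 0 < z ^ γ := Real.rpow_pos_of_pos hz γ
    rw [h3] at h2
    have hγm1 : γ/m ≤ 1 := by rw [div_le_one hm0]; exact hmγ.le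
    have h6 : 0 ≤ (K₂-K₁) + A * z ^ (m-γ) := by
      have h6a : (0:ℝ) ≤ (K₂-K₁) * (1 - γ/m) := mul_nonneg hKsub.le (by linarith)
      linarith [h2, h6a]
    have h7 : 0 ≤ (K₂-K₁) * z ^ γ + A * (z ^ (m-γ) * z ^ γ) := by
      linarith [mul_nonneg hzγ.le h6]
    rw [h4] at h7; exact h7
  -- tail supersolution inequality
  have htail : ∀ z : ℝ, xs ≤ z → 0 < z →
      r * (K₁ * z ^ γ + χ21) - (K₁ * (b12*γ + σ12^2/2*γ*(γ-1)) * z ^ γ) - z ^ γ ≤ 0 := by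
    intro z hzs hz
    have hxγ : xs ^ γ ≤ z ^ γ := Real.rpow_le_rpow hxsp.le hzs hγ0.le
    have key2 : (r - b12*γ + (1/2)*σ12^2*γ*(1-γ)) * (K₂-K₁) * xs ^ γ * (m-γ)
        - r * χ21 * (m-γ) = σ12^2/2 * γ * m * (m-γ) * χ21 := by
      linear_combination (r - b12*γ + (1/2)*σ12^2*γ*(1-γ)) * hχeq - γ * χ21 * hQ
    have hposR : (0:ℝ) < σ12^2/2 * γ * m * (m-γ) * χ21 := by
      have h1 : (0:ℝ) < σ12^2/2 := by positivity
      exact mul_pos (mul_pos (mul_pos (mul_pos h1 hγ0) hm0) (sub_pos.2 hmγ)) hχ21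
    have hstep : r * χ21 ≤ (r - b12*γ + (1/2)*σ12^2*γ*(1-γ)) * (K₂-K₁) * xs ^ γ := by
      have e : ((r - b12*γ + (1/2)*σ12^2*γ*(1-γ)) * (K₂-K₁) * xs ^ γ - r * χ21) * (m-γ)
          = (σ12^2/2*γ*m*χ21) * (m-γ) := by linear_combination key2
      have e2 := mul_right_cancel₀ (sub_pos.2 hmγ).ne' e
      have e3 : (0:ℝ) ≤ σ12^2/2*γ*m*χ21 :=
        mul_nonneg (mul_nonneg (mul_nonneg (by positivity) hγ0.le) hm0.le) hχ21.le
      linarith [e2, e3]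
    have hmono := mul_le_mul_of_nonneg_left hxγ (mul_pos hd12 hKsub).le
    have hzid : K₂ * (r - b12*γ + (1/2)*σ12^2*γ*(1-γ)) * z ^ γ = z ^ γ := by
      linear_combination (z ^ γ) * hK₂eq
    linarith [hstep, hmono, hzid]
  -- main case analysis
  intro x hx hxne
  have hxγpos : 0 < x ^ γ := Real.rpow_pos_of_pos hx γ
  have L11 : Lop b11 σ11 (fun y => K₁ * y ^ γ - c12) x
      = K₁ * (b11*γ + σ11^2/2*γ*(γ-1)) * x ^ γ := by
    have e : (fun y : ℝ => K₁ * y ^ γ - c12) = (fun y : ℝ => K₁ * y ^ γ + 0 * y ^ m + (-c12)) := by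
      funext y; ring
    rw [e, lop_aux b11 σ11 K₁ γ 0 m (-c12) hx]; ring
  have L21 : Lop b11 σ11 (fun y => K₁ * y ^ γ) x
      = K₁ * (b11*γ + σ11^2/2*γ*(γ-1)) * x ^ γ := by
    have e : (fun y : ℝ => K₁ * y ^ γ) = (fun y : ℝ => K₁ * y ^ γ + 0 * y ^ m + 0) := by
      funext y; ring
    rw [e, lop_aux b11 σ11 K₁ γ 0 m 0 hx]; ring
  have ha11 : r * (K₁ * x ^ γ - c12) - Lop b11 σ11 (fun y => K₁ * y ^ γ - c12) x - x ^ γ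
      = r * (-c12) := by
    rw [L11]; linear_combination (x ^ γ) * hK₁eq
  have ha21 : r * (K₁ * x ^ γ) - Lop b11 σ11 (fun y => K₁ * y ^ γ) x - x ^ γ = 0 := by
    rw [L21]; linear_combination (x ^ γ) * hK₁eq
  have hrc : (0:ℝ) ≤ r * (-c12) := mul_nonneg hr.le (by linarith)
  simp only [solvesQVI]
  rcases lt_or_gt_of_ne hxne with hlt | hgt
  · -- x < xs
    have L12 : Lop b12 σ12
        (fun y => if y < xs then K₂ * y ^ γ + A * y ^ m - c12 else K₁ * y ^ γ - c12 + χ21) x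
        = K₂ * (b12*γ + σ12^2/2*γ*(γ-1)) * x ^ γ + A * (b12*m + σ12^2/2*m*(m-1)) * x ^ m := by
      rw [lop_congr isOpen_Iio (Set.mem_Iio.2 hlt)
        (g := fun y => K₂ * y ^ γ + A * y ^ m + (-c12))
        (fun y hy => by simp only [Set.mem_Iio] at hy; simp only [if_pos hy]; ring),
        lop_aux b12 σ12 K₂ γ A m (-c12) hx]
    have L22 : Lop b12 σ12
        (fun y => if y < xs then K₂ * y ^ γ + A * y ^ m else K₁ * y ^ γ + χ21) x
        = K₂ * (b12*γ + σ12^2/2*γ*(γ-1)) * x ^ γ + A * (b12*m + σ12^2/2*m*(m-1)) * x ^ m := by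
      rw [lop_congr isOpen_Iio (Set.mem_Iio.2 hlt)
        (g := fun y => K₂ * y ^ γ + A * y ^ m + 0)
        (fun y hy => by simp only [Set.mem_Iio] at hy; simp only [if_pos hy]; ring),
        lop_aux b12 σ12 K₂ γ A m 0 hx]
    have ha12 : r * (K₂ * x ^ γ + A * x ^ m - c12)
        - (K₂ * (b12*γ + σ12^2/2*γ*(γ-1)) * x ^ γ + A * (b12*m + σ12^2/2*m*(m-1)) * x ^ m)
        - x ^ γ = r * (-c12) := by
      linear_combination (x ^ γ) * hK₂eq - (A * x ^ m) * hQ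
    have ha22 : r * (K₂ * x ^ γ + A * x ^ m)
        - (K₂ * (b12*γ + σ12^2/2*γ*(γ-1)) * x ^ γ + A * (b12*m + σ12^2/2*m*(m-1)) * x ^ m)
        - x ^ γ = 0 := by
      linear_combination (x ^ γ) * hK₂eq - (A * x ^ m) * hQ
    have hφ1 := hYoung x hx
    have hφ0 := hphilow x hx hlt
    simp only [if_pos hlt]
    refine ⟨?_, ?_, ?_, ?_⟩
    · rw [ha11]
      exact qviA hrc (by ring) (by linarith)
    · rw [L12, ha12]
      exact qviA hrc (by ring) (by linarith)
    · rw [ha21]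
      exact qviC rfl (by linarith) (by linarith)
    · rw [L22, ha22]
      exact qviC rfl (by linarith) (by linarith)
  · -- x > xs
    have hnlt : ¬ x < xs := not_lt.2 hgt.le
    have L22t : Lop b12 σ12
        (fun y => if y < xs then K₂ * y ^ γ + A * y ^ m else K₁ * y ^ γ + χ21) x
        = K₁ * (b12*γ + σ12^2/2*γ*(γ-1)) * x ^ γ := by
      rw [lop_congr isOpen_Ioi (Set.mem_Ioi.2 hgt)
        (g := fun y => K₁ * y ^ γ + 0 * y ^ m + χ21)
        (fun y hy => by
          simp only [Set.mem_Ioi] at hy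
          simp only [if_neg (not_lt.2 hy.le)]; ring),
        lop_aux b12 σ12 K₁ γ 0 m χ21 hx]
      ring
    simp only [if_neg hnlt]
    refine ⟨?_, ?_, ?_, ?_⟩
    · rw [ha11]
      exact qviA hrc (by ring) (by linarith)
    · exact qviB2 (le_of_eq (by ring)) (by ring)
    · rw [ha21]
      exact qviC rfl (by linarith) (by linarith)
    · rw [L22t]
      exact qviB1 (htail x hgt.le hx) (by ring)
end

section
/- Theorem 4.5, case B1. In addition to the common setup, assume b11 = b21, σ11 = σ21, b12 = b22, σ12 = σ22, and K₁ := K_{11} = K_{21} > K_{12} = K_{22} =: K₂; assume c12 > 0, c21 > 0, χ12 > 0, χ21 > 0 (Condition B1). Let m⁺ := m_{11}⁺ (= m_{21}⁺), x* := (m⁺·χ12 / ((m⁺ − γ)·(K₁ − K₂)))^{1/γ} and A := −(K₁ − K₂)·(γ/m⁺)·(x*)^{γ − m⁺} (these are the smooth-fit relations (K₁ − K₂)(x*)^γ = m⁺χ12/(m⁺ − γ) and A = (K₂ − K₁)(γ/m⁺)(x*)^{γ − m⁺}). Define v11(x) = v21(x) = K₁·x^γ + A·x^{m⁺} for 0 <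 x < x* and = K₂·x^γ + χ12 for x ≥ x*, and v12(x) = v22(x) = K₂·x^γ for all x > 0. Then this quadruple solves the QVI system at every x > 0 with x ≠ x*. -/
lemma hasDerivAt_kpow (K p x : ℝ) (hx : x ≠ 0) :
    HasDerivAt (fun y : ℝ => K * y ^ p) (K * (p * x ^ (p-1))) x :=
  (Real.hasDerivAt_rpow_const (Or.inl hx)).const_mul K

lemma deriv_phi (K A p q : ℝ) {x : ℝ} (hx : 0 < x) :
    deriv (fun y : ℝ => K * y ^ p + A * y ^ q) x
      = K * (p * x ^ (p-1)) + A * (q * x ^ (q-1)) :=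
  ((hasDerivAt_kpow K p x hx.ne').add (hasDerivAt_kpow A q x hx.ne')).deriv

lemma deriv2_phi (K A p q : ℝ) {x : ℝ} (hx : 0 < x) :
    deriv (deriv (fun y : ℝ => K * y ^ p + A * y ^ q)) x
      = K * p * ((p-1) * x ^ (p-1-1)) + A * q * ((q-1) * x ^ (q-1-1)) := by
  have hev : deriv (fun y : ℝ => K * y^p + A*y^q)
      =ᶠ[nhds x] (fun y => K*p * y^(p-1) + A*q * y^(q-1)) := by
    filter_upwards [Ioi_mem_nhds hx] with y hy
    rw [deriv_phi K A p q hy]; ring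
  rw [hev.deriv_eq]
  exact ((hasDerivAt_kpow (K*p) (p-1) x hx.ne').add
    (hasDerivAt_kpow (A*q) (q-1) x hx.ne')).deriv

lemma lop_phi (b σ K A p q : ℝ) {x : ℝ} (hx : 0 < x) :
    Lop b σ (fun y : ℝ => K * y^p + A * y^q) x
      = K * ((1/2)*σ^2*p*(p-1) + b*p) * x^p
        + A * ((1/2)*σ^2*q*(q-1) + b*q) * x^q := by
  unfold Lop
  rw [deriv_phi K A p q hx, deriv2_phi K A p q hx]
  have h2 : ∀ t:ℝ, x^(2:ℕ) * x^(t-1-1) = x^t := fun t => by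
    rw [← Real.rpow_natCast x 2, ← Real.rpow_add hx]; congr 1; ring
  have h1 : ∀ t:ℝ, x * x^(t-1) = x^t := fun t => by
    nth_rewrite 1 [← Real.rpow_one x]
    rw [← Real.rpow_add hx]; congr 1; ring
  linear_combination ((1/2)*σ^2*K*p*(p-1)) * h2 p + ((1/2)*σ^2*A*q*(q-1)) * h2 q
    + (b*K*p) * h1 p + (b*A*q) * h1 q

lemma lop_congr_s16 {v φ : ℝ → ℝ} {x : ℝ} (h : v =ᶠ[nhds x] φ) (b σ : ℝ) :
    Lop b σ v x = Lop b σ φ x := by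
  unfold Lop; rw [h.deriv_eq, h.deriv.deriv_eq]

lemma young_upper (γ m x xs : ℝ) (hγ : 0 < γ) (hγm : γ < m) (hx : 0 < x) (hxs : 0 < xs) :
    x ^ γ ≤ (γ/m) * (xs^(γ-m) * x^m) + (1-γ/m) * xs^γ := by
  have hm0 : 0 < m := hγ.trans hγm
  set u : ℝ := x / xs with hu_def
  have hu : 0 < u := div_pos hx hxs
  have h := Real.geom_mean_le_arith_mean2_weighted
    (w₁ := γ/m) (w₂ := 1-γ/m) (p₁ := u^m) (p₂ := 1)
    (by positivity) (by rw [sub_nonneg, div_le_one hm0]; exact hγm.le)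
    (by positivity) zero_le_one (by ring)
  have hL : (u^m)^(γ/m) = u^γ := by
    rw [← Real.rpow_mul hu.le]
    congr 1; field_simp
  rw [Real.one_rpow, mul_one, hL] at h
  have huγ : u^γ = x^γ / xs^γ := Real.div_rpow hx.le hxs.le _
  have hum : u^m = x^m / xs^m := Real.div_rpow hx.le hxs.le _
  have hsub : xs^(γ-m) = xs^γ / xs^m := Real.rpow_sub hxs γ m
  have hxsγ : 0 < xs^γ := Real.rpow_pos_of_pos hxs γ
  have hxsm : 0 < xs^m := Real.rpow_pos_of_pos hxs m
  rw [huγ, hum] at h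
  rw [hsub]
  have := mul_le_mul_of_nonneg_left h hxsγ.le
  calc x^γ = xs^γ * (x^γ / xs^γ) := by field_simp
    _ ≤ xs^γ * (γ/m * (x^m / xs^m) + (1-γ/m) * 1) := this
    _ = γ/m * (xs^γ / xs^m * x^m) + (1-γ/m) * xs^γ := by field_simp

lemma young_lower (γ m x xs : ℝ) (hγ : 0 < γ) (hγm : γ < m) (hx : 0 < x) (hxs : 0 < xs)
    (hle : x ≤ xs) :
    (γ/m) * (xs^(γ-m) * x^m) ≤ x^γ := by
  have hm0 : 0 < m := hγ.trans hγm
  have h1 : xs^(γ-m) ≤ x^(γ-m) :=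
    Real.rpow_le_rpow_of_nonpos hx hle (by linarith)
  have hxm : 0 < x^m := Real.rpow_pos_of_pos hx m
  have h2 : xs^(γ-m) * x^m ≤ x^(γ-m) * x^m :=
    mul_le_mul_of_nonneg_right h1 hxm.le
  have h3 : x^(γ-m) * x^m = x^γ := by
    rw [← Real.rpow_add hx]; congr 1; ring
  have h4 : γ/m ≤ 1 := by rw [div_le_one hm0]; exact hγm.le
  have h5 : 0 ≤ xs^(γ-m) * x^m := by positivity
  calc (γ/m) * (xs^(γ-m) * x^m) ≤ 1 * (xs^(γ-m) * x^m) :=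
        mul_le_mul_of_nonneg_right h4 h5
    _ = xs^(γ-m) * x^m := one_mul _
    _ ≤ x^γ := by rw [← h3]; exact h2

lemma root_eq {r b σ m : ℝ} (hσ : 0 < σ) (hr : 0 ≤ r)
    (hm : m = 1/2 - b/σ^2 + Real.sqrt ((1/2 - b/σ^2)^2 + 2*r/σ^2)) :
    (1/2)*σ^2*m*(m-1) + b*m - r = 0 := by
  have hσ2 : 0 < σ^2 := by positivity
  have hd : (0:ℝ) ≤ (1/2 - b/σ^2)^2 + 2*r/σ^2 := by positivity
  have h1 : (m - (1/2 - b/σ^2))^2 = (1/2 - b/σ^2)^2 + 2*r/σ^2 := by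
    rw [hm, add_sub_cancel_left]; exact Real.sq_sqrt hd
  have hc : (b/σ^2) * σ^2 = b := by field_simp
  have he : (2*r/σ^2) * σ^2 = 2*r := by field_simp
  linear_combination (σ^2/2) * h1 - m * hc + (1/2) * he

lemma root_pos {r b σ m : ℝ} (hσ : 0 < σ) (hr : 0 < r)
    (hm : m = 1/2 - b/σ^2 + Real.sqrt ((1/2 - b/σ^2)^2 + 2*r/σ^2)) :
    0 < m := by
  have hσ2 : 0 < σ^2 := by positivity
  set c : ℝ := 1/2 - b/σ^2 with hc
  have hs0 : 0 ≤ Real.sqrt (c^2 + 2*r/σ^2) := Real.sqrt_nonneg _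
  have hs2 : Real.sqrt (c^2 + 2*r/σ^2)^2 = c^2 + 2*r/σ^2 := Real.sq_sqrt (by positivity)
  have hr2 : 0 < 2*r/σ^2 := by positivity
  by_contra hcon
  push_neg at hcon
  rw [hm] at hcon
  nlinarith [hs0, hs2, hr2, hcon]

lemma root_gt {r b σ γ m : ℝ} (hσ : 0 < σ) (hγ0 : 0 < γ) (hr : 0 < r)
    (hd : 0 < r - b*γ + (1/2)*σ^2*γ*(1-γ))
    (hm : m = 1/2 - b/σ^2 + Real.sqrt ((1/2 - b/σ^2)^2 + 2*r/σ^2)) :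
    γ < m := by
  have hσ2 : 0 < σ^2 := by positivity
  set c : ℝ := 1/2 - b/σ^2 with hc
  have hs0 : 0 ≤ Real.sqrt (c^2 + 2*r/σ^2) := Real.sqrt_nonneg _
  have hs2 : Real.sqrt (c^2 + 2*r/σ^2)^2 = c^2 + 2*r/σ^2 := Real.sq_sqrt (by positivity)
  by_contra hcon
  push_neg at hcon
  rw [hm] at hcon
  have h1 : Real.sqrt (c^2 + 2*r/σ^2) ≤ γ - c := by linarith
  have h2 : Real.sqrt (c^2 + 2*r/σ^2)^2 ≤ (γ - c)^2 := by nlinarith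
  have h3 : 2*r/σ^2 + 2*γ*c - γ^2 ≤ 0 := by nlinarith
  rw [hc] at h3
  have h4 := mul_le_mul_of_nonneg_right h3 hσ2.le
  have h5 : (2*r/σ^2 + 2*γ*(1/2 - b/σ^2) - γ^2) * σ^2
      = 2*r + γ*σ^2 - 2*γ*b - γ^2*σ^2 := by field_simp; ring
  rw [h5] at h4
  nlinarith [hd]

set_option maxHeartbeats 1600000 in
theorem thm4_5_B1
    (r γ c12 c21 χ12 χ21 : ℝ)
    (b11 σ11 b12 σ12 b21 σ21 b22 σ22 : ℝ)
    (K11 K12 K21 K22 : ℝ)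
    (hr : 0 < r) (hγ0 : 0 < γ) (hγ1 : γ < 1)
    (hσ11 : 0 < σ11) (hσ12 : 0 < σ12) (hσ21 : 0 < σ21) (hσ22 : 0 < σ22)
    (hd11 : 0 < r - b11*γ + (1/2)*σ11^2*γ*(1-γ))
    (hd12 : 0 < r - b12*γ + (1/2)*σ12^2*γ*(1-γ))
    (hd21 : 0 < r - b21*γ + (1/2)*σ21^2*γ*(1-γ))
    (hd22 : 0 < r - b22*γ + (1/2)*σ22^2*γ*(1-γ))
    (hrb11 : b11 < r) (hrb12 : b12 < r) (hrb21 : b21 < r) (hrb22 : b22 < r)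
    (hK11 : K11 = 1/(r - b11*γ + (1/2)*σ11^2*γ*(1-γ)))
    (hK12 : K12 = 1/(r - b12*γ + (1/2)*σ12^2*γ*(1-γ)))
    (hK21 : K21 = 1/(r - b21*γ + (1/2)*σ21^2*γ*(1-γ)))
    (hK22 : K22 = 1/(r - b22*γ + (1/2)*σ22^2*γ*(1-γ)))
    (heqb21 : b21 = b11) (heqσ21 : σ21 = σ11)
    (heqb22 : b22 = b12) (heqσ22 : σ22 = σ12)
    (K₁ K₂ : ℝ) (hK₁ : K₁ = K11) (hK₂ : K₂ = K12)
    (hKgt : K₂ < K₁)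
    (m : ℝ) (hm : m = 1/2 - b11/σ11^2 + Real.sqrt ((1/2 - b11/σ11^2)^2 + 2*r/σ11^2))
    (xs A : ℝ)
    (hxs : xs = (m * χ12 / ((m - γ) * (K₁ - K₂))) ^ (1/γ))
    (hA : A = -(K₁ - K₂) * (γ / m) * xs ^ (γ - m))
    (hc12 : 0 < c12) (hc21 : 0 < c21) (hχ12 : 0 < χ12) (hχ21 : 0 < χ21)
    :
    ∀ x : ℝ, 0 < x → x ≠ xs →
      solvesQVI r γ c12 c21 χ12 χ21 b11 σ11 b12 σ12 b21 σ21 b22 σ22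
        (fun y => if y < xs then K₁ * y ^ γ + A * y ^ m else K₂ * y ^ γ + χ12)
        (fun y => K₂ * y ^ γ)
        (fun y => if y < xs then K₁ * y ^ γ + A * y ^ m else K₂ * y ^ γ + χ12)
        (fun y => K₂ * y ^ γ) x := by
  intro x hx hne
  rw [heqb21, heqσ21, heqb22, heqσ22]
  -- basic facts
  have hσ2 : (0:ℝ) < σ11^2 := by positivity
  have hK1 : K₁ = 1/(r - b11*γ + (1/2)*σ11^2*γ*(1-γ)) := hK₁.trans hK11
  have hK2 : K₂ = 1/(r - b12*γ + (1/2)*σ12^2*γ*(1-γ)) := hK₂.trans hK12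
  have hK1D : K₁ * (r - b11*γ + (1/2)*σ11^2*γ*(1-γ)) = 1 := by
    rw [hK1]; exact one_div_mul_cancel (ne_of_gt hd11)
  have hK2D : K₂ * (r - b12*γ + (1/2)*σ12^2*γ*(1-γ)) = 1 := by
    rw [hK2]; exact one_div_mul_cancel (ne_of_gt hd12)
  have hroot : (1/2)*σ11^2*m*(m-1) + b11*m - r = 0 := root_eq hσ11 hr.le hm
  have hm0 : 0 < m := root_pos hσ11 hr hm
  have hmγ : γ < m := root_gt hσ11 hγ0 hr hd11 hm
  have hKd : 0 < K₁ - K₂ := by linarith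
  have hKd' : K₁ - K₂ ≠ 0 := ne_of_gt hKd
  have hmγ0 : 0 < m - γ := by linarith
  have hmγ' : m - γ ≠ 0 := ne_of_gt hmγ0
  have hm' : m ≠ 0 := ne_of_gt hm0
  have hBpos : 0 < m * χ12 / ((m - γ) * (K₁ - K₂)) :=
    div_pos (mul_pos hm0 hχ12) (mul_pos hmγ0 hKd)
  have hxs0 : 0 < xs := by rw [hxs]; exact Real.rpow_pos_of_pos hBpos _
  have hxsγ : xs ^ γ = m * χ12 / ((m - γ) * (K₁ - K₂)) := by
    rw [hxs, ← Real.rpow_mul hBpos.le, one_div, inv_mul_cancel₀ hγ0.ne', Real.rpow_one]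
  have hP : (K₁ - K₂) * xs^γ = m * χ12 / (m - γ) := by
    rw [hxsγ]; field_simp
  have hPP : (K₁-K₂)*((1 - γ/m)*xs^γ) = χ12 := by
    have h6 : (K₁-K₂)*((1-γ/m)*xs^γ) = (1-γ/m)*((K₁-K₂)*xs^γ) := by ring
    rw [h6, hP]; field_simp
  -- bounds on g(x) = (K₁-K₂)x^γ + A x^m
  have hAxm : A*x^m = -((K₁-K₂)*((γ/m)*(xs^(γ-m)*x^m))) := by rw [hA]; ring
  have hupper : (K₁-K₂)*x^γ + A*x^m ≤ χ12 := by
    have hy := young_upper γ m x xs hγ0 hmγ hx hxs0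
    have h1 : (K₁-K₂)*x^γ ≤ (K₁-K₂)*((γ/m)*(xs^(γ-m)*x^m) + (1-γ/m)*xs^γ) :=
      mul_le_mul_of_nonneg_left hy hKd.le
    have h2 : (K₁-K₂)*((γ/m)*(xs^(γ-m)*x^m) + (1-γ/m)*xs^γ)
        = -(A*x^m) + χ12 := by rw [hAxm, ← hPP]; ring
    linarith [h1, h2]
  -- PDE facts for w = K₂ x^γ
  have hLw : Lop b12 σ12 (fun y : ℝ => K₂ * y ^ γ) x
      = K₂ * ((1/2)*σ12^2*γ*(γ-1) + b12*γ) * x ^ γ := by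
    have hφ : (fun y:ℝ => K₂*y^γ) = (fun y:ℝ => K₂*y^γ + 0*y^(1:ℝ)) := by
      funext y; ring
    rw [hφ, lop_phi b12 σ12 K₂ 0 γ 1 hx]; ring
  have hPDE2 : r * (K₂ * x ^ γ) - K₂ * ((1/2)*σ12^2*γ*(γ-1) + b12*γ) * x ^ γ - x ^ γ = 0 := by
    linear_combination x^γ * hK2D
  rcases hne.lt_or_gt with hlt | hgt
  · -- case x < xs
    have hev : (fun y : ℝ => if y < xs then K₁ * y ^ γ + A * y ^ m else K₂ * y ^ γ + χ12)
        =ᶠ[nhds x] (fun y : ℝ => K₁ * y ^ γ + A * y ^ m) := by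
      filter_upwards [Iio_mem_nhds hlt] with y hy
      simp only [Set.mem_Iio] at hy
      exact if_pos hy
    have hLv : Lop b11 σ11
        (fun y : ℝ => if y < xs then K₁ * y ^ γ + A * y ^ m else K₂ * y ^ γ + χ12) x
        = K₁ * ((1/2)*σ11^2*γ*(γ-1) + b11*γ) * x ^ γ
          + A * ((1/2)*σ11^2*m*(m-1) + b11*m) * x ^ m := by
      rw [lop_congr_s16 hev b11 σ11]; exact lop_phi b11 σ11 K₁ A γ m hx
    have hPDE1 : r * (K₁ * x ^ γ + A * x ^ m)
        - (K₁ * ((1/2)*σ11^2*γ*(γ-1) + b11*γ) * x ^ γ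
          + A * ((1/2)*σ11^2*m*(m-1) + b11*m) * x ^ m) - x ^ γ = 0 := by
      linear_combination x^γ * hK1D - (A*x^m) * hroot
    have hlow : 0 ≤ (K₁-K₂)*x^γ + A*x^m := by
      have hy := young_lower γ m x xs hγ0 hmγ hx hxs0 hlt.le
      have h1 : (K₁-K₂)*((γ/m)*(xs^(γ-m)*x^m)) ≤ (K₁-K₂)*x^γ :=
        mul_le_mul_of_nonneg_left hy hKd.le
      linarith [hAxm]
    refine ⟨?_, ?_, ?_, ?_⟩
    · simp only [if_pos hlt]
      rw [hLv]
      refine le_antisymm (max_le (min_le_of_left_le (by linarith [hPDE1]))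
        (by linarith [hupper])) ?_
      exact le_trans (le_min (by linarith [hPDE1]) (by linarith)) (le_max_left _ _)
    · simp only [if_pos hlt]
      rw [hLw]
      refine le_antisymm (max_le (min_le_of_left_le (by linarith [hPDE2]))
        (by linarith [hlow])) ?_
      exact le_trans (le_min (by linarith [hPDE2]) (by linarith)) (le_max_left _ _)
    · simp only [if_pos hlt]
      rw [hLv]
      refine le_antisymm (max_le (min_le_of_left_le (by linarith [hPDE1]))
        (by linarith [hupper])) ?_
      exact le_trans (le_min (by linarith [hPDE1]) (by linarith)) (le_max_left _ _)
    · simp only [if_pos hlt]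
      rw [hLw]
      refine le_antisymm (max_le (min_le_of_left_le (by linarith [hPDE2]))
        (by linarith [hlow])) ?_
      exact le_trans (le_min (by linarith [hPDE2]) (by linarith)) (le_max_left _ _)
  · -- case x > xs
    have hnlt : ¬ x < xs := not_lt.mpr hgt.le
    have hev : (fun y : ℝ => if y < xs then K₁ * y ^ γ + A * y ^ m else K₂ * y ^ γ + χ12)
        =ᶠ[nhds x] (fun y : ℝ => K₂ * y ^ γ + χ12) := by
      filter_upwards [Ioi_mem_nhds hgt] with y hy
      simp only [Set.mem_Ioi] at hy
      exact if_neg (not_lt.mpr hy.le)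
    have hLv : Lop b11 σ11
        (fun y : ℝ => if y < xs then K₁ * y ^ γ + A * y ^ m else K₂ * y ^ γ + χ12) x
        = K₂ * ((1/2)*σ11^2*γ*(γ-1) + b11*γ) * x ^ γ := by
      rw [lop_congr_s16 hev b11 σ11]
      have hφ : (fun y:ℝ => K₂*y^γ + χ12) = (fun y:ℝ => K₂*y^γ + χ12*y^(0:ℝ)) := by
        funext y; rw [Real.rpow_zero]; ring
      rw [hφ, lop_phi b11 σ11 K₂ χ12 γ 0 hx, Real.rpow_zero]; ring
    have hxγle : xs^γ ≤ x^γ := Real.rpow_le_rpow hxs0.le hgt.le hγ0.le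
    have hD1m : (r - b11*γ + (1/2)*σ11^2*γ*(1-γ))*m - r*(m-γ)
        = γ*((1/2)*σ11^2*m*(m-γ)) := by linear_combination (-γ) * hroot
    have hpos1 : 0 < γ*((1/2)*σ11^2*m*(m-γ)) := by
      have h1 : (0:ℝ) < (1/2)*σ11^2 := by positivity
      exact mul_pos hγ0 (mul_pos (mul_pos h1 hm0) hmγ0)
    have hD1ge : r*(m-γ) ≤ (r - b11*γ + (1/2)*σ11^2*γ*(1-γ))*m := by linarith
    have hstep2 : r*χ12 ≤ (r - b11*γ + (1/2)*σ11^2*γ*(1-γ)) * (m*χ12/(m-γ)) := by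
      rw [show (r - b11*γ + (1/2)*σ11^2*γ*(1-γ)) * (m*χ12/(m-γ))
          = (r - b11*γ + (1/2)*σ11^2*γ*(1-γ))*m*χ12/(m-γ) by ring,
        le_div_iff₀ hmγ0]
      linarith [mul_le_mul_of_nonneg_right hD1ge hχ12.le]
    have hstep3 : (r - b11*γ + (1/2)*σ11^2*γ*(1-γ)) * (m*χ12/(m-γ))
        = (1 - K₂*(r - b11*γ + (1/2)*σ11^2*γ*(1-γ)))*xs^γ := by
      linear_combination (-(r - b11*γ + (1/2)*σ11^2*γ*(1-γ))) * hP + xs^γ * hK1D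
    have hK2D1 : 0 ≤ 1 - K₂*(r - b11*γ + (1/2)*σ11^2*γ*(1-γ)) := by
      linarith [hK1D, mul_pos hKd hd11]
    have hstep4 := mul_le_mul_of_nonneg_left hxγle hK2D1
    have ha : r * (K₂ * x ^ γ + χ12)
        - K₂ * ((1/2)*σ11^2*γ*(γ-1) + b11*γ) * x ^ γ - x ^ γ ≤ 0 := by
      linarith [hstep2, hstep3, hstep4]
    refine ⟨?_, ?_, ?_, ?_⟩
    · simp only [if_neg hnlt]
      rw [hLv]
      refine le_antisymm (max_le (min_le_of_left_le ha) (by linarith)) ?_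
      refine le_trans ?_ (le_max_right _ _)
      linarith
    · simp only [if_neg hnlt]
      rw [hLw]
      refine le_antisymm (max_le (min_le_of_left_le (by linarith [hPDE2]))
        (by linarith)) ?_
      exact le_trans (le_min (by linarith [hPDE2]) (by linarith)) (le_max_left _ _)
    · simp only [if_neg hnlt]
      rw [hLv]
      refine le_antisymm (max_le (min_le_of_left_le ha) (by linarith)) ?_
      refine le_trans ?_ (le_max_right _ _)
      linarith
    · simp only [if_neg hnlt]
      rw [hLw]
      refine le_antisymm (max_le (min_le_of_left_le (by linarith [hPDE2]))
        (by linarith)) ?_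
      exact le_trans (le_min (by linarith [hPDE2]) (by linarith)) (le_max_left _ _)
end

section
/- Theorem 4.5, case B4. In addition to the common setup, assume b11 = b21, σ11 = σ21, b12 = b22, σ12 = σ22, and K₁ := K_{11} = K_{21} > K_{12} = K_{22} =: K₂; assume c12 < 0, c21 > 0, χ12 < 0, χ21 > 0, c12 + c21 > 0 and χ12 + χ21 > 0 (Condition B4). Then the quadruple v11(x) = K₂·x^γ + χ12 − c12, v12(x) = K₂·x^γ − c12, v21(x) = K₂·x^γ + χ12, v22(x) = K₂·x^γ solves the QVI system at every x > 0. -/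
lemma Lop_rpow_aux (b σ K c γ : ℝ) (x : ℝ) (hx : 0 < x) :
    Lop b σ (fun y => K * y ^ γ + c) x
      = K * ((1/2) * σ^2 * γ * (γ-1) + b * γ) * x ^ γ := by
  have hd1 : ∀ y : ℝ, 0 < y →
      HasDerivAt (fun z : ℝ => K * z ^ γ + c) (K * (γ * y ^ (γ-1))) y := by
    intro y hy
    exact ((Real.hasDerivAt_rpow_const (p := γ) (Or.inl hy.ne')).const_mul K).add_const c
  have hderiv_eq : deriv (deriv (fun z : ℝ => K * z ^ γ + c)) x
      = deriv (fun y : ℝ => K * (γ * y ^ (γ-1))) x := by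
    apply Filter.EventuallyEq.deriv_eq
    filter_upwards [Ioi_mem_nhds hx] with y hy
    exact (hd1 y hy).deriv
  have hd2 : HasDerivAt (fun y : ℝ => K * (γ * y ^ (γ-1)))
      (K * (γ * ((γ-1) * x ^ (γ-1-1)))) x :=
    ((Real.hasDerivAt_rpow_const (p := γ-1) (Or.inl hx.ne')).const_mul γ).const_mul K
  rw [Lop, (hd1 x hx).deriv, hderiv_eq, hd2.deriv]
  have e1 : x ^ (γ-1-1) * x = x ^ (γ-1) := by
    rw [← Real.rpow_add_one hx.ne']; norm_num
  have e2 : x ^ (γ-1) * x = x ^ γ := by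
    rw [← Real.rpow_add_one hx.ne']; norm_num
  linear_combination ((1/2)*σ^2*K*γ*(γ-1)*x) * e1 + ((1/2)*σ^2*γ*(γ-1)*K + b*K*γ) * e2

set_option maxHeartbeats 1000000 in
theorem thm4_5_B4
    (r γ c12 c21 χ12 χ21 : ℝ)
    (b11 σ11 b12 σ12 b21 σ21 b22 σ22 : ℝ)
    (K11 K12 K21 K22 : ℝ)
    (hr : 0 < r) (hγ0 : 0 < γ) (hγ1 : γ < 1)
    (hσ11 : 0 < σ11) (hσ12 : 0 < σ12) (hσ21 : 0 < σ21) (hσ22 : 0 < σ22)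
    (hd11 : 0 < r - b11*γ + (1/2)*σ11^2*γ*(1-γ))
    (hd12 : 0 < r - b12*γ + (1/2)*σ12^2*γ*(1-γ))
    (hd21 : 0 < r - b21*γ + (1/2)*σ21^2*γ*(1-γ))
    (hd22 : 0 < r - b22*γ + (1/2)*σ22^2*γ*(1-γ))
    (hrb11 : b11 < r) (hrb12 : b12 < r) (hrb21 : b21 < r) (hrb22 : b22 < r)
    (hK11 : K11 = 1/(r - b11*γ + (1/2)*σ11^2*γ*(1-γ)))
    (hK12 : K12 = 1/(r - b12*γ + (1/2)*σ12^2*γ*(1-γ)))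
    (hK21 : K21 = 1/(r - b21*γ + (1/2)*σ21^2*γ*(1-γ)))
    (hK22 : K22 = 1/(r - b22*γ + (1/2)*σ22^2*γ*(1-γ)))
    (heqb21 : b21 = b11) (heqσ21 : σ21 = σ11)
    (heqb22 : b22 = b12) (heqσ22 : σ22 = σ12)
    (K₁ K₂ : ℝ) (hK₁ : K₁ = K11) (hK₂ : K₂ = K12)
    (hKgt : K₂ < K₁)
    (hc12 : c12 < 0) (hc21 : 0 < c21) (hχ12 : χ12 < 0) (hχ21 : 0 < χ21)
    (hcsum : 0 < c12 + c21) (hχsum : 0 < χ12 + χ21)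
    :
    ∀ x : ℝ, 0 < x →
      solvesQVI r γ c12 c21 χ12 χ21 b11 σ11 b12 σ12 b21 σ21 b22 σ22
        (fun y => K₂ * y ^ γ + χ12 - c12)
        (fun y => K₂ * y ^ γ - c12)
        (fun y => K₂ * y ^ γ + χ12)
        (fun y => K₂ * y ^ γ) x := by
  intro x hx
  have hxγ : 0 < x ^ γ := Real.rpow_pos_of_pos hx γ
  have h2 : K₂ * (r - b12*γ + (1/2)*σ12^2*γ*(1-γ)) = 1 := by
    rw [hK₂, hK12, one_div, inv_mul_cancel₀ hd12.ne']
  have h1 : K₁ * (r - b11*γ + (1/2)*σ11^2*γ*(1-γ)) = 1 := by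
    rw [hK₁, hK11, one_div, inv_mul_cancel₀ hd11.ne']
  have hlt : K₂ * (r - b11*γ + (1/2)*σ11^2*γ*(1-γ)) < 1 := by
    have := mul_lt_mul_of_pos_right hKgt hd11; linarith
  have hL11 : Lop b11 σ11 (fun y => K₂ * y ^ γ + χ12 - c12) x
      = K₂ * ((1/2) * σ11^2 * γ * (γ-1) + b11 * γ) * x ^ γ := by
    rw [show (fun y : ℝ => K₂ * y ^ γ + χ12 - c12) = (fun y : ℝ => K₂ * y ^ γ + (χ12 - c12))
      from funext fun y => by ring]
    exact Lop_rpow_aux _ _ _ _ _ _ hx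
  have hL12 : Lop b12 σ12 (fun y => K₂ * y ^ γ - c12) x
      = K₂ * ((1/2) * σ12^2 * γ * (γ-1) + b12 * γ) * x ^ γ := by
    rw [show (fun y : ℝ => K₂ * y ^ γ - c12) = (fun y : ℝ => K₂ * y ^ γ + (-c12))
      from funext fun y => by ring]
    exact Lop_rpow_aux _ _ _ _ _ _ hx
  have hL21 : Lop b11 σ11 (fun y => K₂ * y ^ γ + χ12) x
      = K₂ * ((1/2) * σ11^2 * γ * (γ-1) + b11 * γ) * x ^ γ :=
    Lop_rpow_aux _ _ _ _ _ _ hx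
  have hL22 : Lop b12 σ12 (fun y => K₂ * y ^ γ) x
      = K₂ * ((1/2) * σ12^2 * γ * (γ-1) + b12 * γ) * x ^ γ := by
    rw [show (fun y : ℝ => K₂ * y ^ γ) = (fun y : ℝ => K₂ * y ^ γ + 0)
      from funext fun y => by ring]
    exact Lop_rpow_aux _ _ _ _ _ _ hx
  unfold solvesQVI
  rw [heqb21, heqσ21, heqb22, heqσ22]
  simp only [hL11, hL12, hL21, hL22]
  refine ⟨?_, ?_, ?_, ?_⟩
  · rw [show K₂ * x ^ γ + χ12 - c12 - (K₂ * x ^ γ + χ12 - c12) = 0 from by ring,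
        show K₂ * x ^ γ + χ12 - c12 - (K₂ * x ^ γ - c12 + χ12) = 0 from by ring]
    exact max_eq_right (min_le_right _ _)
  · have hA : r * (K₂ * x ^ γ - c12) - K₂ * (1 / 2 * σ12 ^ 2 * γ * (γ - 1) + b12 * γ) * x ^ γ
        - x ^ γ = -(r * c12) := by linear_combination x ^ γ * h2
    rw [hA, show K₂ * x ^ γ - c12 - (K₂ * x ^ γ - c12) = 0 from by ring,
        min_eq_right (by have := mul_pos hr (neg_pos.mpr hc12); linarith : (0:ℝ) ≤ -(r * c12)),
        max_eq_left (by linarith : K₂ * x ^ γ - c12 - (K₂ * x ^ γ + χ12 - c12 + χ21) ≤ 0)]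
  · have hA : r * (K₂ * x ^ γ + χ12) - K₂ * (1 / 2 * σ11 ^ 2 * γ * (γ - 1) + b11 * γ) * x ^ γ
        - x ^ γ = (K₂ * (r - b11*γ + (1/2)*σ11^2*γ*(1-γ)) - 1) * x ^ γ + r * χ12 := by ring
    have hAneg : (K₂ * (r - b11*γ + (1/2)*σ11^2*γ*(1-γ)) - 1) * x ^ γ + r * χ12 ≤ 0 := by
      have t1 := mul_neg_of_neg_of_pos (show K₂ * (r - b11*γ + (1/2)*σ11^2*γ*(1-γ)) - 1 < 0 from by linarith) hxγ
      have t2 := mul_neg_of_pos_of_neg hr hχ12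
      linarith
    rw [hA, min_eq_left
        (by linarith : (K₂ * (r - b11*γ + (1/2)*σ11^2*γ*(1-γ)) - 1) * x ^ γ + r * χ12
          ≤ K₂ * x ^ γ + χ12 - (K₂ * x ^ γ + χ12 - c12 - c21)),
        show K₂ * x ^ γ + χ12 - (K₂ * x ^ γ + χ12) = 0 from by ring,
        max_eq_right hAneg]
  · have hA : r * (K₂ * x ^ γ) - K₂ * (1 / 2 * σ12 ^ 2 * γ * (γ - 1) + b12 * γ) * x ^ γ
        - x ^ γ = 0 := by linear_combination x ^ γ * h2
    rw [hA, min_eq_left (by linarith : (0:ℝ) ≤ K₂ * x ^ γ - (K₂ * x ^ γ - c12 - c21))]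
    exact max_eq_left (by linarith)
end
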